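/- arXiv:2010.00073 — 8 statements merged into one kernel-verified Lean document; each statement's English description precedes it below -/
import Mathlib

section
/- Fix integers k ≥ 0 and J ≥ 1, a real B > 0, and n ≥ J + k + 2. For every deterministic forecasting strategy in the noiseless feedback model — at each time t the forecaster outputs s_t as a function of θ_1,…,θ_{t−1}, after which θ_t is revealed — there exists θ ∈ ℝ^n with ‖D^{k+1}θ‖₀ ≤ J and ‖θ‖_∞ ≤ B (indeed with all entries in {−B, 0, B}) such that Σ_{t=1}^n (s_t(θ_1,…,θ_{t−1}) − θ_t)² ≥ J B² / 4. -/
/-- First-order discrete difference operator on sequences: `(D x)_j = x_{j+1} − x_j`.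
The `i`-th order operator `D^i` is its `i`-fold iterate `diffOp^[i]`. -/
noncomputable def diffOp : (ℕ → ℝ) → (ℕ → ℝ) := fun x j => x (j + 1) - x j

/-- Adversarial sequence. -/
noncomputable def adv (s : (t : ℕ) → (Fin t → ℝ) → ℝ) (J : ℕ) (B : ℝ) (t : ℕ) : ℝ :=
  if t < J then (if B / 2 ≤ |s t (fun i : Fin t => adv s J B i)| then 0 else B) else 0
termination_by t
decreasing_by all_goals exact i.isLt

lemma adv_zero (s : (t : ℕ) → (Fin t → ℝ) → ℝ) (J : ℕ) (B : ℝ) {t : ℕ} (h : J ≤ t) :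
    adv s J B t = 0 := by
  rw [adv]; simp [Nat.not_lt.mpr h]

lemma adv_iter_zero (s : (t : ℕ) → (Fin t → ℝ) → ℝ) (J : ℕ) (B : ℝ) (i : ℕ) :
    ∀ j, J ≤ j → diffOp^[i] (adv s J B) j = 0 := by
  induction i with
  | zero => intro j hj; simpa using adv_zero s J B hj
  | succ i ih =>
      intro j hj
      rw [Function.iterate_succ_apply']
      simp only [diffOp]
      rw [ih j hj, ih (j+1) (le_trans hj (Nat.le_succ j))]
      ring

lemma adv_mem (s : (t : ℕ) → (Fin t → ℝ) → ℝ) (J : ℕ) (B : ℝ) (t : ℕ) :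
    adv s J B t = 0 ∨ adv s J B t = B := by
  rw [adv]
  split_ifs <;> simp

lemma adv_gap (s : (t : ℕ) → (Fin t → ℝ) → ℝ) (J : ℕ) (B : ℝ) (hB : 0 < B)
    {t : ℕ} (ht : t < J) :
    B ^ 2 / 4 ≤ (s t (fun i : Fin t => adv s J B i) - adv s J B t) ^ 2 := by
  set v := s t (fun i : Fin t => adv s J B i) with hv
  have hθ : adv s J B t = if B / 2 ≤ |v| then 0 else B := by
    rw [adv]; simp [ht, hv]
  have h4 : B ^ 2 / 4 = (B / 2) ^ 2 := by ring
  rw [h4, hθ]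
  split_ifs with h
  · calc (B/2)^2 ≤ |v|^2 := by
          apply pow_le_pow_left₀ (by positivity) h
        _ = (v - 0)^2 := by rw [sq_abs]; ring
  · push_neg at h
    have h1 : |v - B| ≥ B / 2 := by
      have := abs_sub_abs_le_abs_sub B v
      rw [abs_sub_comm] at this
      have hBa : |B| = B := abs_of_pos hB
      nlinarith [abs_nonneg (v - B), abs_nonneg v]
    calc (B/2)^2 ≤ |v - B|^2 := by
          apply pow_le_pow_left₀ (by positivity) h1
        _ = (v - B)^2 := sq_abs _

/-- Noiseless lower bound under exact sparsity: for any deterministic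
forecasting strategy there exists a sequence `θ` taking values in `{−B, 0, B}` (hence
`‖θ‖_∞ ≤ B`) with `‖D^{k+1}θ‖₀ ≤ J` on which the cumulative squared error is at least
`J B² / 4`. -/
theorem stmt2 (k J : ℕ) (hJ : 1 ≤ J) (B : ℝ) (hB : 0 < B) (n : ℕ)
    (hn : J + k + 2 ≤ n) (s : (t : ℕ) → (Fin t → ℝ) → ℝ) :
    ∃ θ : ℕ → ℝ,
      ((Finset.range (n - (k + 1))).filter fun j => diffOp^[k + 1] θ j ≠ 0).card ≤ J ∧
      (∀ t, t < n → θ t = -B ∨ θ t = 0 ∨ θ t = B) ∧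
      (∀ t, t < n → |θ t| ≤ B) ∧
      (J : ℝ) * B ^ 2 / 4 ≤
        ∑ t : Fin n, (s t.val (fun i : Fin t.val => θ i.val) - θ t.val) ^ 2 := by
  refine ⟨adv s J B, ?_, ?_, ?_, ?_⟩
  · calc ((Finset.range (n - (k + 1))).filter fun j => diffOp^[k + 1] (adv s J B) j ≠ 0).card
        ≤ (Finset.range J).card := by
          apply Finset.card_le_card
          intro j hj
          simp only [Finset.mem_filter, Finset.mem_range] at hj ⊢
          by_contra hc
          exact hj.2 (adv_iter_zero s J B (k+1) j (Nat.le_of_not_lt hc))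
      _ = J := Finset.card_range J
  · intro t _
    rcases adv_mem s J B t with h | h
    · exact Or.inr (Or.inl h)
    · exact Or.inr (Or.inr h)
  · intro t _
    rcases adv_mem s J B t with h | h <;> rw [h] <;> simp [abs_of_pos hB, hB.le]
  · have hJn : J ≤ n := by omega
    have key : ∀ t ∈ Finset.range J,
        B ^ 2 / 4 ≤ (s t (fun i : Fin t => adv s J B i) - adv s J B t) ^ 2 := by
      intro t ht
      exact adv_gap s J B hB (Finset.mem_range.mp ht)
    calc (J : ℝ) * B ^ 2 / 4
        = ∑ _t ∈ Finset.range J, B ^ 2 / 4 := by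
          rw [Finset.sum_const, Finset.card_range]; ring
      _ ≤ ∑ t ∈ Finset.range J, (s t (fun i : Fin t => adv s J B i) - adv s J B t) ^ 2 :=
          Finset.sum_le_sum key
      _ ≤ ∑ t ∈ Finset.range n, (s t (fun i : Fin t => adv s J B i) - adv s J B t) ^ 2 := by
          apply Finset.sum_le_sum_of_subset_of_nonneg
          · exact Finset.range_subset_range.mpr hJn
          · intro t _ _; positivity
      _ = ∑ t : Fin n, (s t.val (fun i : Fin t.val => adv s J B i.val) - adv s J B t.val) ^ 2 := by
          exact (Fin.sum_univ_eq_sum_range _ n).symm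
end

section
/- Fix an integer k ≥ 0 and an integer t ≥ 2(k+1). Let θ ∈ ℝ^t, let θ̃ = recenter(θ), let (a, b) = pack(θ̃), and let W be any 2^l × 2^l real orthogonal matrix, where 2^l (l = ⌊log₂ t⌋) is the common length of a and b. Then there exists a constant c_k > 0 depending only on k such that (‖W a‖₂ + ‖W b‖₂)/√t ≤ c_k · t^k ‖D^{k+1} θ‖₁. -/
open Matrix

/-- `ℓ₁` norm of `D^{k+1} θ` for a vector `θ ∈ ℝ^t` (extended by `0` off-range;
only the in-range entries are used). -/
noncomputable def tvNorm (k t : ℕ) (θ : Fin t → ℝ) : ℝ :=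
  ∑ j ∈ Finset.range (t - (k + 1)),
    |diffOp^[k + 1] (fun i => if h : i < t then θ ⟨i, h⟩ else 0) j|

/-- The `t × (k+1)` design matrix with rows `(1, j, …, j^k)`, `j = 1,…,t`. -/
noncomputable def designMatR (t m : ℕ) : Matrix (Fin t) (Fin m) ℝ :=
  Matrix.of fun j i => ((j : ℕ) + 1 : ℝ) ^ (i : ℕ)

/-- Residual of the OLS fit of `θ` onto polynomials of degree at most `k`:
`recenter(θ) = θ − X_t (X_tᵀ X_t)⁻¹ X_tᵀ θ`. -/
noncomputable def recenter (k t : ℕ) (θ : Fin t → ℝ) : Fin t → ℝ :=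
  θ - (designMatR t (k + 1)).mulVec
    (((designMatR t (k + 1))ᵀ * designMatR t (k + 1))⁻¹.mulVec
      ((designMatR t (k + 1))ᵀ.mulVec θ))

noncomputable def Ppoly (i : ℕ) : Polynomial ℝ :=
  Polynomial.C ((i.factorial : ℝ)⁻¹) * (descPochhammer ℝ i).comp (Polynomial.X - Polynomial.C 1)

lemma hock (k : ℕ) : ∀ j : ℕ, ∑ m ∈ Finset.range (j - k), (j - 1 - m).choose k = j.choose (k+1) := by
  intro j
  induction j with
  | zero => simp
  | succ j ih =>
    rcases Nat.lt_or_ge j k with h | h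
    · rw [Nat.sub_eq_zero_of_le (by omega), Finset.range_zero, Finset.sum_empty,
        Nat.choose_eq_zero_of_lt (by omega)]
    · have h1 : j + 1 - k = (j - k) + 1 := by omega
      rw [h1, Finset.sum_range_succ']
      have e1 : ∀ i, j + 1 - 1 - (i+1) = j - 1 - i := fun i => by omega
      have e2 : j + 1 - 1 - 0 = j := by omega
      simp only [e1, e2, ih]
      rw [Nat.choose_succ_succ' j k, Nat.add_comm]

lemma hockR (k j : ℕ) : ∑ m ∈ Finset.range (j - k), ((j - 1 - m).choose k : ℝ) = (j.choose (k+1) : ℝ) := by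
  rw [← Nat.cast_sum, hock]

lemma swap_sum (n : ℕ) (F : ℕ → ℕ → ℝ) :
    ∑ m ∈ Finset.range n, ∑ r ∈ Finset.range m, F m r
    = ∑ r ∈ Finset.range n, ∑ m ∈ Finset.Ico (r+1) n, F m r := by
  simpa only [Finset.range_eq_Ico]
    using (Finset.sum_Ico_Ico_comm' 0 n (fun i j => F j i)).symm

lemma newton (k : ℕ) (x : ℕ → ℝ) (j : ℕ) :
    x j = (∑ i ∈ Finset.range (k+1), (j.choose i : ℝ) * diffOp^[i] x 0)
      + ∑ m ∈ Finset.range (j - k), ((j - 1 - m).choose k : ℝ) * diffOp^[k+1] x m := by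
  induction k generalizing x with
  | zero =>
    have hs : ∀ m, diffOp x m = x (m+1) - x m := fun m => rfl
    simp only [zero_add, Function.iterate_one, Function.iterate_zero, id_eq, Nat.sub_zero,
      Nat.choose_zero_right, Nat.cast_one, one_mul, Finset.range_one, Finset.sum_singleton, hs]
    rw [Finset.sum_range_sub x j]
    ring
  | succ k ih =>
    have hg : ∀ m, diffOp^[k+1] x m = diffOp^[k+1] x 0 + ∑ r ∈ Finset.range m, diffOp^[k+2] x r := by
      intro m
      have hs : ∀ r, diffOp^[k+2] x r = diffOp^[k+1] x (r+1) - diffOp^[k+1] x r := by 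
        intro r
        rw [Function.iterate_succ_apply' diffOp (k+1) x]
        rfl
      simp only [hs]
      rw [Finset.sum_range_sub (fun r => diffOp^[k+1] x r) m]
      ring
    rw [ih x]
    have expand : ∑ m ∈ Finset.range (j - k), ((j - 1 - m).choose k : ℝ) * diffOp^[k+1] x m
        = (j.choose (k+1) : ℝ) * diffOp^[k+1] x 0
          + ∑ m ∈ Finset.range (j - (k+1)), ((j - 1 - m).choose (k+1) : ℝ) * diffOp^[k+2] x m := by
      calc ∑ m ∈ Finset.range (j - k), ((j - 1 - m).choose k : ℝ) * diffOp^[k+1] x m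
          = ∑ m ∈ Finset.range (j - k), (((j - 1 - m).choose k : ℝ) * diffOp^[k+1] x 0
              + ∑ r ∈ Finset.range m, ((j - 1 - m).choose k : ℝ) * diffOp^[k+2] x r) := by
            refine Finset.sum_congr rfl fun m _ => ?_
            rw [hg m, mul_add, Finset.mul_sum]
        _ = (∑ m ∈ Finset.range (j - k), ((j - 1 - m).choose k : ℝ)) * diffOp^[k+1] x 0
              + ∑ m ∈ Finset.range (j - k), ∑ r ∈ Finset.range m, ((j - 1 - m).choose k : ℝ) * diffOp^[k+2] x r := by
            rw [Finset.sum_add_distrib, Finset.sum_mul]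
        _ = (j.choose (k+1) : ℝ) * diffOp^[k+1] x 0
              + ∑ r ∈ Finset.range (j - (k+1)), ((j - 1 - r).choose (k+1) : ℝ) * diffOp^[k+2] x r := by
            rw [hockR, swap_sum]
            congr 1
            -- remaining: swap result equals truncated sum
            have inner : ∀ r, ∑ m ∈ Finset.Ico (r+1) (j-k), ((j - 1 - m).choose k : ℝ)
                = ((j - 1 - r).choose (k+1) : ℝ) := by
              intro r
              rw [Finset.sum_Ico_eq_sum_range]
              have e3 : j - k - (r+1) = (j - 1 - r) - k := by omega
              have e4 : ∀ m, j - 1 - (r + 1 + m) = (j - 1 - r) - 1 - m := fun m => by omega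
              rw [e3]
              simp only [e4]
              exact hockR k (j - 1 - r)
            calc ∑ r ∈ Finset.range (j - k), ∑ m ∈ Finset.Ico (r+1) (j-k), ((j - 1 - m).choose k : ℝ) * diffOp^[k+2] x r
                = ∑ r ∈ Finset.range (j - k), ((j - 1 - r).choose (k+1) : ℝ) * diffOp^[k+2] x r := by
                  refine Finset.sum_congr rfl fun r _ => ?_
                  rw [← Finset.sum_mul, inner r]
              _ = ∑ r ∈ Finset.range (j - (k+1)), ((j - 1 - r).choose (k+1) : ℝ) * diffOp^[k+2] x r := by
                  rcases Nat.lt_or_ge j (k+1) with h | h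
                  · have e6 : j - k = 0 := by omega
                    have e7 : j - (k+1) = 0 := by omega
                    rw [e6, e7]
                  · have h2 : j - k = (j - (k+1)) + 1 := by omega
                    rw [h2, Finset.sum_range_succ]
                    have e5 : j - 1 - (j - (k+1)) = k := by omega
                    rw [e5, Nat.choose_succ_self, Nat.cast_zero, zero_mul, add_zero]
    rw [expand, Finset.sum_range_succ (fun i => (j.choose i : ℝ) * diffOp^[i] x 0) (k+1)]
    ring

lemma Ppoly_natDegree_le (i : ℕ) : (Ppoly i).natDegree ≤ i := by
  refine (Polynomial.natDegree_C_mul_le _ _).trans ?_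
  rw [Polynomial.natDegree_comp, descPochhammer_natDegree, Polynomial.natDegree_X_sub_C, mul_one]

lemma Ppoly_eval (i j : ℕ) : (Ppoly i).eval ((j:ℝ)+1) = (j.choose i : ℝ) := by
  rw [Ppoly, Polynomial.eval_mul, Polynomial.eval_C, Polynomial.eval_comp]
  have h1 : (Polynomial.X - Polynomial.C 1 : Polynomial ℝ).eval ((j:ℝ)+1) = ((j:ℕ):ℝ) := by simp
  rw [h1, descPochhammer_eval_eq_descFactorial, Nat.descFactorial_eq_factorial_mul_choose]
  have h2 : ((i.factorial : ℕ) : ℝ) ≠ 0 := by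
    exact_mod_cast i.factorial_ne_zero
  push_cast
  field_simp

lemma exists_coeffs (k t : ℕ) (d : ℕ → ℝ) :
    ∃ c : Fin (k+1) → ℝ, ∀ j : Fin t,
      (designMatR t (k+1)).mulVec c j = ∑ i ∈ Finset.range (k+1), ((j:ℕ).choose i : ℝ) * d i := by
  refine ⟨fun s => ∑ i ∈ Finset.range (k+1), d i * (Ppoly i).coeff s, fun j => ?_⟩
  have heval : ∀ i ∈ Finset.range (k+1),
      (Ppoly i).eval (((j:ℕ):ℝ)+1) = ∑ s ∈ Finset.range (k+1), (Ppoly i).coeff s * (((j:ℕ):ℝ)+1)^s := by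
    intro i hi
    exact Polynomial.eval_eq_sum_range' (lt_of_le_of_lt (Ppoly_natDegree_le i)
      (Nat.lt_succ_of_le (Finset.mem_range_succ_iff.mp hi))) _
  calc (designMatR t (k+1)).mulVec (fun s => ∑ i ∈ Finset.range (k+1), d i * (Ppoly i).coeff s) j
      = ∑ s : Fin (k+1), (((j:ℕ):ℝ)+1)^(s:ℕ) * ∑ i ∈ Finset.range (k+1), d i * (Ppoly i).coeff s := by
        simp [Matrix.mulVec, dotProduct, designMatR]
    _ = ∑ s ∈ Finset.range (k+1), (((j:ℕ):ℝ)+1)^s * ∑ i ∈ Finset.range (k+1), d i * (Ppoly i).coeff s := by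
        rw [Fin.sum_univ_eq_sum_range (fun s => (((j:ℕ):ℝ)+1)^s * ∑ i ∈ Finset.range (k+1), d i * (Ppoly i).coeff s)]
    _ = ∑ s ∈ Finset.range (k+1), ∑ i ∈ Finset.range (k+1), d i * ((Ppoly i).coeff s * (((j:ℕ):ℝ)+1)^s) := by
        refine Finset.sum_congr rfl fun s _ => ?_
        rw [Finset.mul_sum]
        refine Finset.sum_congr rfl fun i _ => by ring
    _ = ∑ i ∈ Finset.range (k+1), ∑ s ∈ Finset.range (k+1), d i * ((Ppoly i).coeff s * (((j:ℕ):ℝ)+1)^s) :=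
        Finset.sum_comm
    _ = ∑ i ∈ Finset.range (k+1), d i * ∑ s ∈ Finset.range (k+1), (Ppoly i).coeff s * (((j:ℕ):ℝ)+1)^s := by
        refine Finset.sum_congr rfl fun i _ => (Finset.mul_sum _ _ _).symm
    _ = ∑ i ∈ Finset.range (k+1), ((j:ℕ).choose i : ℝ) * d i := by
        refine Finset.sum_congr rfl fun i hi => ?_
        rw [← heval i hi, Ppoly_eval]
        ring

lemma isUnit_gram (k t : ℕ) (ht : k + 1 ≤ t) :
    IsUnit ((designMatR t (k+1))ᵀ * designMatR t (k+1)).det := by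
  set X := designMatR t (k+1) with hX
  rw [← Matrix.isUnit_iff_isUnit_det]
  rw [← Matrix.mulVec_injective_iff_isUnit]
  intro a b hab
  have hv : (Xᵀ * X).mulVec (a - b) = 0 := by
    rw [Matrix.mulVec_sub, hab, sub_self]
  suffices h : a - b = 0 by
    have := sub_eq_zero.mp h; exact this
  set v := a - b with hv'
  have h0 : X.mulVec v ⬝ᵥ X.mulVec v = 0 := by
    rw [Matrix.dotProduct_mulVec, ← Matrix.mulVec_transpose, Matrix.mulVec_mulVec, hv,
      zero_dotProduct]
  have hXv : X.mulVec v = 0 := dotProduct_self_eq_zero.mp h0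
  -- restrict to first k+1 rows: Vandermonde
  have hvand : (Matrix.vandermonde (fun i : Fin (k+1) => ((i : ℕ) : ℝ) + 1)).mulVec v = 0 := by
    funext i
    have := congrFun hXv (Fin.castLE ht i)
    simpa [hX, Matrix.mulVec, dotProduct, designMatR, Matrix.vandermonde] using this
  exact Matrix.eq_zero_of_mulVec_eq_zero
    (Matrix.det_vandermonde_ne_zero_iff.mpr (fun i j hij => by
      have : ((i:ℕ):ℝ) = ((j:ℕ):ℝ) := by linarith [add_right_cancel hij]
      exact Fin.ext (by exact_mod_cast this))) hvand

lemma proj_contract {n : ℕ} (M : Matrix (Fin n) (Fin n) ℝ) (hMsymm : Mᵀ = M)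
    (hMM : M * M = M) (u : Fin n → ℝ) :
    (u - M.mulVec u) ⬝ᵥ (u - M.mulVec u) ≤ u ⬝ᵥ u := by
  have hdot : M.mulVec u ⬝ᵥ M.mulVec u = u ⬝ᵥ M.mulVec u := by
    rw [Matrix.dotProduct_mulVec (M.mulVec u) M u, ← Matrix.mulVec_transpose,
      Matrix.mulVec_mulVec, hMsymm, hMM]
    exact dotProduct_comm _ _
  have hnn : 0 ≤ M.mulVec u ⬝ᵥ M.mulVec u := by
    have h : M.mulVec u ⬝ᵥ M.mulVec u = ∑ j, (M.mulVec u j)^2 := by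
      simp [dotProduct, sq]
    rw [h]; positivity
  have hcomm : M.mulVec u ⬝ᵥ u = u ⬝ᵥ M.mulVec u := dotProduct_comm _ _
  generalize M.mulVec u = w at hdot hnn hcomm ⊢
  rw [sub_dotProduct, dotProduct_sub, dotProduct_sub]
  linarith

lemma contraction (k t : ℕ) (ht : k + 1 ≤ t) (θ : Fin t → ℝ) (c : Fin (k+1) → ℝ) :
    ∑ j, (θ j - (designMatR t (k+1)).mulVec
        (((designMatR t (k+1))ᵀ * designMatR t (k+1))⁻¹.mulVec
          ((designMatR t (k+1))ᵀ.mulVec θ)) j) ^ 2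
      ≤ ∑ j, (θ j - (designMatR t (k+1)).mulVec c j) ^ 2 := by
  set X := designMatR t (k+1) with hX
  set G := Xᵀ * X with hG
  have hGu : IsUnit G.det := isUnit_gram k t ht
  set M := X * G⁻¹ * Xᵀ with hM
  have hMX : M * X = X := by
    calc M * X = X * G⁻¹ * (Xᵀ * X) := by rw [Matrix.mul_assoc (X * G⁻¹) Xᵀ X]
      _ = X * (G⁻¹ * G) := by rw [hG, Matrix.mul_assoc]
      _ = X := by rw [Matrix.nonsing_inv_mul G hGu, Matrix.mul_one]
  have hGsymm : Gᵀ = G := by rw [hG, Matrix.transpose_mul, Matrix.transpose_transpose]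
  have hMsymm : Mᵀ = M := by
    rw [hM, Matrix.transpose_mul, Matrix.transpose_mul, Matrix.transpose_transpose,
      Matrix.transpose_nonsing_inv, hGsymm, Matrix.mul_assoc]
  have hMM : M * M = M := by
    calc M * M = X * G⁻¹ * ((Xᵀ * X) * (G⁻¹ * Xᵀ)) := by
          rw [hM]
          simp only [Matrix.mul_assoc]
      _ = X * (G⁻¹ * G) * (G⁻¹ * Xᵀ) := by
          rw [← hG]
          simp only [Matrix.mul_assoc]
      _ = M := by rw [Matrix.nonsing_inv_mul G hGu, Matrix.mul_one, hM, Matrix.mul_assoc]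
  have hvec : (θ - X.mulVec (G⁻¹.mulVec (Xᵀ.mulVec θ)))
      = (θ - X.mulVec c) - M.mulVec (θ - X.mulVec c) := by
    rw [Matrix.mulVec_sub, Matrix.mulVec_mulVec c M X, hMX, Matrix.mulVec_mulVec,
      Matrix.mulVec_mulVec]
    abel
  have hsq : ∀ v : Fin t → ℝ, v ⬝ᵥ v = ∑ j, (v j)^2 := by
    intro v; simp [dotProduct, sq]
  have h1 : ∑ j, (θ j - X.mulVec (G⁻¹.mulVec (Xᵀ.mulVec θ)) j) ^ 2
      = (θ - X.mulVec (G⁻¹.mulVec (Xᵀ.mulVec θ))) ⬝ᵥ (θ - X.mulVec (G⁻¹.mulVec (Xᵀ.mulVec θ))) := by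
    rw [hsq]
    simp [Pi.sub_apply]
  have h2 : ∑ j, (θ j - X.mulVec c j) ^ 2 = (θ - X.mulVec c) ⬝ᵥ (θ - X.mulVec c) := by
    rw [hsq]
    simp [Pi.sub_apply]
  rw [h1, h2, hvec]
  exact proj_contract M hMsymm hMM (θ - X.mulVec c)

lemma orth_sum {n : ℕ} (W : Matrix (Fin n) (Fin n) ℝ) (hW : Wᵀ * W = 1) (v : Fin n → ℝ) :
    ∑ i, (W.mulVec v i)^2 = ∑ i, (v i)^2 := by
  have h1 : ∑ i, (W.mulVec v i)^2 = (W.mulVec v) ⬝ᵥ (W.mulVec v) := by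
    simp [dotProduct, sq]
  have h2 : ∑ i, (v i)^2 = v ⬝ᵥ v := by simp [dotProduct, sq]
  rw [h1, h2, Matrix.dotProduct_mulVec, ← Matrix.mulVec_transpose, Matrix.mulVec_mulVec, hW,
    Matrix.one_mulVec]

lemma sum_sq_comp_le {m t : ℕ} (f : Fin t → ℝ) (e : Fin m → Fin t) (he : Function.Injective e) :
    ∑ i, (f (e i))^2 ≤ ∑ j, (f j)^2 := by
  have h := Finset.sum_image (s := (Finset.univ : Finset (Fin m))) (g := e)
    (f := fun j => (f j)^2) (fun a _ b _ hab => he hab)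
  rw [← h]
  exact Finset.sum_le_sum_of_subset_of_nonneg (Finset.subset_univ _) (fun j _ _ => sq_nonneg _)

lemma pointwise_bound (k t : ℕ) (θ : Fin t → ℝ) :
    ∃ c : Fin (k+1) → ℝ, ∀ j : Fin t,
      |θ j - (designMatR t (k+1)).mulVec c j| ≤ (t:ℝ)^k * tvNorm k t θ := by
  set x : ℕ → ℝ := fun i => if h : i < t then θ ⟨i, h⟩ else 0 with hx
  have htv : tvNorm k t θ = ∑ m ∈ Finset.range (t-(k+1)), |diffOp^[k+1] x m| := rfl
  obtain ⟨c, hc⟩ := exists_coeffs k t (fun i => diffOp^[i] x 0)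
  refine ⟨c, fun j => ?_⟩
  have hxj : θ j = x (j:ℕ) := by simp [hx, j.isLt]
  rw [hc j, hxj, newton k x (j:ℕ), add_sub_cancel_left]
  calc |∑ m ∈ Finset.range ((j:ℕ) - k), (((j:ℕ) - 1 - m).choose k : ℝ) * diffOp^[k+1] x m|
      ≤ ∑ m ∈ Finset.range ((j:ℕ) - k), |(((j:ℕ) - 1 - m).choose k : ℝ) * diffOp^[k+1] x m| :=
        Finset.abs_sum_le_sum_abs _ _
    _ ≤ ∑ m ∈ Finset.range ((j:ℕ) - k), (t:ℝ)^k * |diffOp^[k+1] x m| := by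
        refine Finset.sum_le_sum fun m _ => ?_
        rw [abs_mul]
        refine mul_le_mul_of_nonneg_right ?_ (abs_nonneg _)
        rw [abs_of_nonneg (by positivity)]
        have h1 : ((j:ℕ) - 1 - m).choose k ≤ t^k :=
          le_trans (Nat.choose_le_pow _ k) (Nat.pow_le_pow_left (by have := j.isLt; omega) k)
        exact_mod_cast h1
    _ = (t:ℝ)^k * ∑ m ∈ Finset.range ((j:ℕ) - k), |diffOp^[k+1] x m| := (Finset.mul_sum _ _ _).symm
    _ ≤ (t:ℝ)^k * tvNorm k t θ := by
        refine mul_le_mul_of_nonneg_left ?_ (by positivity)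
        rw [htv]
        exact Finset.sum_le_sum_of_subset_of_nonneg
          (Finset.range_subset_range.mpr (by have := j.isLt; omega)) (fun m _ _ => abs_nonneg _)

/-- Wavelet-energy lower bound for the `TV^k` distance: for `θ ∈ ℝ^t`
with `t ≥ 2(k+1)`, `θ̃ = recenter(θ)`, `(a,b) = pack(θ̃)` (the first and last `2^l`
entries with `l = ⌊log₂ t⌋`), and any orthogonal `W`,
`(‖Wa‖₂ + ‖Wb‖₂)/√t ≤ c_k · t^k ‖D^{k+1}θ‖₁` for a constant `c_k > 0` depending only
on `k`. -/
theorem stmt3 (k : ℕ) :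
    ∃ c : ℝ, 0 < c ∧
      ∀ t : ℕ, 2 * (k + 1) ≤ t →
      ∀ θ : Fin t → ℝ,
      ∀ l : ℕ, l = Nat.log2 t →
      ∀ hpow : 2 ^ l ≤ t,
      ∀ W : Matrix (Fin (2 ^ l)) (Fin (2 ^ l)) ℝ, Wᵀ * W = 1 →
        (Real.sqrt (∑ i, (W.mulVec
            (fun i : Fin (2 ^ l) => recenter k t θ (Fin.castLE hpow i)) i) ^ 2) +
         Real.sqrt (∑ i, (W.mulVec
            (fun i : Fin (2 ^ l) => recenter k t θ
              ⟨t - 2 ^ l + i.val, by have := i.isLt; omega⟩) i) ^ 2)) /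
          Real.sqrt t ≤
        c * (t : ℝ) ^ k * tvNorm k t θ := by
  refine ⟨2, by norm_num, ?_⟩
  intro t ht θ l hl hpow W hW
  have ht1 : k + 1 ≤ t := by omega
  have ht0 : 0 < t := by omega
  obtain ⟨c, hc⟩ := pointwise_bound k t θ
  set B := (t:ℝ)^k * tvNorm k t θ with hB
  have htvnn : 0 ≤ tvNorm k t θ := Finset.sum_nonneg fun m _ => abs_nonneg _
  have hBnn : 0 ≤ B := by rw [hB]; positivity
  have hE : ∑ j, (recenter k t θ j)^2 ≤ (t:ℝ) * B^2 := by
    have h1 : ∑ j, (recenter k t θ j)^2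
        = ∑ j, (θ j - (designMatR t (k+1)).mulVec
            (((designMatR t (k+1))ᵀ * designMatR t (k+1))⁻¹.mulVec
              ((designMatR t (k+1))ᵀ.mulVec θ)) j)^2 :=
      Finset.sum_congr rfl fun j _ => rfl
    have h2 := contraction k t ht1 θ c
    have h3 : ∑ j, (θ j - (designMatR t (k+1)).mulVec c j)^2 ≤ (t:ℝ) * B^2 := by
      calc ∑ j, (θ j - (designMatR t (k+1)).mulVec c j)^2
          ≤ ∑ _j : Fin t, B^2 := Finset.sum_le_sum fun j _ => by
            rw [← sq_abs]
            exact pow_le_pow_left₀ (abs_nonneg _) (hc j) 2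
        _ = (t:ℝ) * B^2 := by
            rw [Finset.sum_const, Finset.card_univ, Fintype.card_fin, nsmul_eq_mul]
    rw [h1]; exact le_trans h2 h3
  have sqrt_bound : ∀ (e : Fin (2^l) → Fin t), Function.Injective e →
      Real.sqrt (∑ i, (W.mulVec (fun i : Fin (2^l) => recenter k t θ (e i)) i)^2)
        ≤ Real.sqrt t * B := by
    intro e he
    have h1 := orth_sum W hW (fun i : Fin (2^l) => recenter k t θ (e i))
    have h2 := sum_sq_comp_le (recenter k t θ) e he
    have h3 : ∑ i, (W.mulVec (fun i : Fin (2^l) => recenter k t θ (e i)) i)^2 ≤ (t:ℝ)*B^2 := by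
      rw [h1]; exact le_trans h2 hE
    calc Real.sqrt (∑ i, (W.mulVec (fun i : Fin (2^l) => recenter k t θ (e i)) i)^2)
        ≤ Real.sqrt ((t:ℝ)*B^2) := Real.sqrt_le_sqrt h3
      _ = Real.sqrt t * B := by rw [Real.sqrt_mul (Nat.cast_nonneg t), Real.sqrt_sq hBnn]
  have ha := sqrt_bound (Fin.castLE hpow) (Fin.castLE_injective hpow)
  have hb := sqrt_bound (fun i : Fin (2^l) => ⟨t - 2^l + i.val, by have := i.isLt; omega⟩)
    (fun a b hab => by
      have h := congrArg Fin.val hab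
      simp only at h
      exact Fin.ext (by omega))
  have hst : (0:ℝ) < Real.sqrt t := Real.sqrt_pos.mpr (by exact_mod_cast ht0)
  rw [div_le_iff₀ hst]
  refine le_trans (add_le_add ha hb) (le_of_eq ?_)
  rw [hB]; ring
end

section
/- Fix an integer k ≥ 0 and an integer t ≥ k + 2. There exists a constant c_k > 0 depending only on k such that for every θ ∈ ℝ^t, the ordinary-least-squares residual satisfies ‖recenter(θ)‖_∞ ≤ c_k · t^k ‖D^{k+1} θ‖₁. -/
open Matrix

open Polynomial Finset

section Aux
noncomputable def polyCM (n : ℕ) : (Fin (n+1) → ℝ) →ₗ[ℝ] C(Set.Icc (0:ℝ) 1, ℝ) where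
  toFun a := ⟨fun x => ∑ m : Fin (n+1), a m * (x:ℝ)^(m:ℕ), by fun_prop⟩
  map_add' a b := by ext x; simp [add_mul, Finset.sum_add_distrib]
  map_smul' c a := by ext x; simp [Finset.mul_sum, mul_assoc]

lemma polyCM_inj (n : ℕ) : Function.Injective (polyCM n) := by
  intro a b hab
  have h : ∀ y ∈ Set.Icc (0:ℝ) 1, ∑ m : Fin (n+1), (a m - b m) * y^(m:ℕ) = 0 := by
    intro y hy
    have := congrArg (fun f => f ⟨y, hy⟩) hab
    simp only [polyCM, LinearMap.coe_mk, AddHom.coe_mk, ContinuousMap.coe_mk] at this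
    simp [sub_mul, Finset.sum_sub_distrib, this]
  set p : Polynomial ℝ := ∑ m : Fin (n+1), C (a m - b m) * X^(m:ℕ) with hp
  have hpz : p = 0 := by
    apply p.eq_zero_of_infinite_isRoot
    have hinf : (Set.Icc (0:ℝ) 1).Infinite := Set.Icc_infinite (by norm_num : (0:ℝ) < 1)
    apply hinf.mono
    intro y hy
    simp only [Set.mem_setOf_eq, IsRoot.def, hp]
    simp only [eval_finset_sum, eval_mul, eval_C, eval_pow, eval_X]
    simpa using h y hy
  have hcoeff : ∀ m : Fin (n+1), a m - b m = 0 := by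
    intro m
    have : p.coeff m = a m - b m := by
      rw [hp]
      rw [finset_sum_coeff]
      rw [Finset.sum_eq_single m]
      · rw [coeff_C_mul, coeff_X_pow, if_pos rfl, mul_one]
      · intro j _ hj
        rw [coeff_C_mul, coeff_X_pow, if_neg (fun hc => hj (Fin.ext hc.symm)), mul_zero]
      · simp
    rw [hpz] at this; simpa using this.symm
  funext m; have := hcoeff m; linarith

lemma exists_markov (n : ℕ) : ∃ C : ℝ, 1 ≤ C ∧ ∀ p : Polynomial ℝ, p.natDegree ≤ n →
    ∀ B : ℝ, (∀ y ∈ Set.Icc (0:ℝ) 1, |p.eval y| ≤ B) →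
    ∀ x ∈ Set.Icc (0:ℝ) 1, |p.derivative.eval x| ≤ C * B := by
  classical
  set Φ : (Fin (n+1) → ℝ) →ₗ[ℝ] C(Set.Icc (0:ℝ) 1, ℝ) := polyCM n
  have hinj := polyCM_inj n
  haveI : FiniteDimensional ℝ (LinearMap.range Φ) := inferInstance
  obtain ⟨K, hK0, hK⟩ := Φ.exists_antilipschitzWith (LinearMap.ker_eq_bot.mpr hinj)
  set C0 : ℝ := (K:ℝ)
  refine ⟨max 1 ((n+1:ℝ) * (n+1) * C0), le_max_left _ _, ?_⟩
  intro p hdeg B hB x hx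
  have hB0 : 0 ≤ B := le_trans (abs_nonneg _) (hB 0 (by norm_num))
  set a : Fin (n+1) → ℝ := fun m => p.coeff m with ha
  have heval : ∀ y : ℝ, p.eval y = ∑ m : Fin (n+1), a m * y^(m:ℕ) := by
    intro y
    rw [p.eval_eq_sum_range' (Nat.lt_succ_of_le hdeg)]
    rw [Finset.sum_range fun i => p.coeff i * y ^ i]
  have hΦnorm : ‖Φ a‖ ≤ B := by
    rw [ContinuousMap.norm_le _ hB0]
    intro y
    have hy : (Φ a) y = p.eval (y:ℝ) := by
      simp only [Φ, polyCM, LinearMap.coe_mk, AddHom.coe_mk, ContinuousMap.coe_mk]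
      rw [heval]
    rw [hy, Real.norm_eq_abs]
    exact hB _ y.2
  have hanorm : ‖a‖ ≤ C0 * B := by
    have h0 : ‖a‖ ≤ (K:ℝ) * ‖Φ a‖ := by simpa [dist_zero_right] using hK.le_mul_dist a 0
    calc ‖a‖ ≤ C0 * ‖Φ a‖ := h0
    _ ≤ C0 * B := by
        have : (0:ℝ) ≤ C0 := K.2
        nlinarith
  -- bound the derivative
  have hdx : |p.derivative.eval x| ≤ (n+1:ℝ) * (n+1) * C0 * B := by
    have hdd : p.derivative.natDegree < n + 1 :=
      Nat.lt_succ_of_le (le_trans (natDegree_derivative_le p) (Nat.sub_le _ _ |>.trans hdeg))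
    rw [p.derivative.eval_eq_sum_range' hdd]
    calc |∑ i ∈ Finset.range (n+1), p.derivative.coeff i * x ^ i|
        ≤ ∑ i ∈ Finset.range (n+1), |p.derivative.coeff i * x ^ i| := Finset.abs_sum_le_sum_abs _ _
      _ ≤ ∑ i ∈ Finset.range (n+1), (n+1:ℝ) * ‖a‖ := by
          apply Finset.sum_le_sum
          intro i hi
          rw [abs_mul]
          have hxb : |x ^ i| ≤ 1 := by
            rw [abs_pow]
            apply pow_le_one₀ (abs_nonneg _)
            rw [abs_le]; constructor <;> [linarith [hx.1]; exact hx.2]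
          have hc : |p.derivative.coeff i| ≤ (n+1:ℝ) * ‖a‖ := by
            rw [coeff_derivative]
            rw [abs_mul]
            have h1 : |p.coeff (i+1)| ≤ ‖a‖ := by
              by_cases hin : i + 1 < n + 1
              · have := norm_le_pi_norm a ⟨i+1, hin⟩
                simpa [ha, Real.norm_eq_abs] using this
              · have : p.coeff (i+1) = 0 :=
                  p.coeff_eq_zero_of_natDegree_lt (by omega)
                simp [this, norm_nonneg]
            have h2 : |((i:ℝ)+1)| ≤ (n+1:ℝ) := by
              rw [abs_of_nonneg (by positivity)]
              have : i ≤ n := by simpa using Nat.lt_succ_iff.mp (Finset.mem_range.mp hi)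
              have : (i:ℝ) ≤ n := by exact_mod_cast this
              linarith
            calc |p.coeff (i+1)| * |((i:ℝ)+1)| ≤ ‖a‖ * (n+1:ℝ) := by
                  apply mul_le_mul h1 h2 (abs_nonneg _) (norm_nonneg _)
              _ = (n+1:ℝ) * ‖a‖ := by ring
          calc |p.derivative.coeff i| * |x^i| ≤ ((n+1:ℝ) * ‖a‖) * 1 := by
                apply mul_le_mul hc hxb (abs_nonneg _) (by positivity)
            _ = (n+1:ℝ) * ‖a‖ := by ring
      _ = (n+1:ℝ) * (n+1) * ‖a‖ := by
          rw [Finset.sum_const, Finset.card_range]; push_cast; ring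
      _ ≤ (n+1:ℝ) * (n+1) * (C0 * B) := by
          have h1 : (0:ℝ) ≤ (n+1:ℝ)*(n+1) := by positivity
          exact mul_le_mul_of_nonneg_left hanorm h1
      _ = (n+1:ℝ) * (n+1) * C0 * B := by ring
  calc |p.derivative.eval x| ≤ (n+1:ℝ) * (n+1) * C0 * B := hdx
    _ ≤ max 1 ((n+1:ℝ) * (n+1) * C0) * B := mul_le_mul_of_nonneg_right (le_max_right _ _) hB0

lemma exists_nikolskii (k : ℕ) : ∃ C T0 : ℝ, 1 ≤ C ∧ 1 ≤ T0 ∧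
    ∀ t : ℕ, T0 ≤ (t:ℝ) → ∀ p : Polynomial ℝ, p.natDegree ≤ k → ∀ s : ℕ, 1 ≤ s → s ≤ t →
    (t:ℝ) * (p.eval (s:ℝ))^2 ≤ C * ∑ j ∈ Finset.range t, (p.eval ((j:ℝ)+1))^2 := by
  obtain ⟨CM, hCM1, hCM⟩ := exists_markov (2*k)
  refine ⟨8*CM, 4*CM, by linarith, by linarith, ?_⟩
  intro t ht p hdeg s hs1 hst
  have ht0 : (0:ℝ) < t := by linarith
  have ht1 : (1:ℝ) ≤ t := by linarith
  set q : Polynomial ℝ := p^2 with hqdef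
  have hqev : ∀ x : ℝ, q.eval x = (p.eval x)^2 := by intro x; rw [hqdef, eval_pow]
  have hqnn : ∀ x : ℝ, 0 ≤ q.eval x := fun x => (hqev x) ▸ sq_nonneg _
  have hqdeg : q.natDegree ≤ 2*k := by
    rw [hqdef]
    calc (p^2).natDegree ≤ 2 * p.natDegree := by
          rw [natDegree_pow]
      _ ≤ 2*k := by omega
  -- max of q on [0,t]
  obtain ⟨x₀, hx₀mem, hx₀max⟩ := (isCompact_Icc (a := (0:ℝ)) (b := (t:ℝ))).exists_isMaxOn
    (f := fun x => q.eval x) (Set.nonempty_Icc.mpr (by linarith)) q.continuous.continuousOn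
  set S := q.eval x₀ with hSdef
  have hS0 : 0 ≤ S := hqnn x₀
  -- Markov for the rescaled polynomial
  set qt : Polynomial ℝ := q.comp (C (t:ℝ) * X) with hqt
  have hqtev : ∀ y : ℝ, qt.eval y = q.eval ((t:ℝ)*y) := by
    intro y; rw [hqt, eval_comp, eval_mul, eval_C, eval_X]
  have hqtdeg : qt.natDegree ≤ 2*k := by
    rw [hqt, natDegree_comp]
    calc q.natDegree * (C (t:ℝ) * X).natDegree ≤ q.natDegree * 1 := by
          apply Nat.mul_le_mul_left
          calc (C (t:ℝ) * X).natDegree ≤ (C (t:ℝ)).natDegree + X.natDegree := natDegree_mul_le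
            _ ≤ 0 + 1 := Nat.add_le_add (natDegree_C _).le natDegree_X.le
            _ = 1 := rfl
      _ ≤ 2*k := by omega
  have hqtB : ∀ y ∈ Set.Icc (0:ℝ) 1, |qt.eval y| ≤ S := by
    intro y hy
    rw [hqtev, abs_of_nonneg (hqnn _)]
    apply hx₀max
    constructor
    · nlinarith [hy.1]
    · nlinarith [hy.2, hy.1]
  have hM := hCM qt hqtdeg S hqtB
  -- derivative bound for q on [0,t]
  have hqtder : ∀ y : ℝ, qt.derivative.eval y = (t:ℝ) * q.derivative.eval ((t:ℝ)*y) := by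
    intro y
    rw [hqt, derivative_comp, eval_mul, eval_comp, eval_mul, eval_C, eval_X]
    rw [derivative_mul, derivative_C, derivative_X]
    simp
  have hder : ∀ x ∈ Set.Icc (0:ℝ) (t:ℝ), |q.derivative.eval x| ≤ CM * S / (t:ℝ) := by
    intro x hx
    have hy : x / (t:ℝ) ∈ Set.Icc (0:ℝ) 1 := by
      constructor
      · exact div_nonneg hx.1 (le_of_lt ht0)
      · rw [div_le_one ht0]; exact hx.2
    have hthis := hM (x / t) hy
    have h7 : (t:ℝ) * (x/t) = x := by field_simp
    rw [hqtder, h7, abs_mul, abs_of_nonneg (le_of_lt ht0)] at hthis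
    rw [le_div_iff₀ ht0]
    linarith [hthis]
  -- Lipschitz bound
  have hLip : ∀ x ∈ Set.Icc (0:ℝ) (t:ℝ), ∀ y ∈ Set.Icc (0:ℝ) (t:ℝ),
      |q.eval y - q.eval x| ≤ (CM * S / t) * |y - x| := by
    intro x hx y hy
    have := Convex.norm_image_sub_le_of_norm_deriv_le (f := fun z => q.eval z)
      (s := Set.Icc (0:ℝ) (t:ℝ)) (C := CM * S / t)
      (fun z _ => (q.hasDerivAt z).differentiableAt)
      (fun z hz => by rw [Polynomial.deriv]; exact hder z hz)
      (convex_Icc _ _) hx hy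
    simpa [Real.norm_eq_abs] using this
  -- window
  set r : ℝ := (t:ℝ) / (2*CM) with hrdef
  have hr2 : 2 ≤ r := by
    rw [hrdef, le_div_iff₀ (by linarith)]
    linarith
  have hrt2 : r ≤ (t:ℝ)/2 := by
    rw [hrdef, div_le_div_iff₀ (by linarith) (by norm_num)]
    nlinarith
  set α : ℝ := if x₀ ≤ (t:ℝ)/2 then x₀ else x₀ - r with hα
  have hα0 : 0 ≤ α := by
    rw [hα]; split_ifs with h
    · exact hx₀mem.1
    · push_neg at h; linarith
  have hαrt : α + r ≤ (t:ℝ) := by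
    rw [hα]; split_ifs with h
    · linarith
    · linarith [hx₀mem.2]
  have hwin : ∀ x ∈ Set.Icc α (α + r), |x - x₀| ≤ r := by
    intro x hx
    rw [hα] at hx
    split_ifs at hx with h
    · rw [abs_le]; constructor <;> [linarith [hx.1]; linarith [hx.2]]
    · rw [abs_le]; constructor <;> [linarith [hx.1]; linarith [hx.2]]
  have hbig : ∀ x ∈ Set.Icc α (α + r), S/2 ≤ q.eval x := by
    intro x hx
    have hxin : x ∈ Set.Icc (0:ℝ) (t:ℝ) := ⟨by linarith [hx.1], by linarith [hx.2]⟩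
    have h1 := hLip x₀ hx₀mem x hxin
    have h2 := hwin x hx
    have h3 : |q.eval x - q.eval x₀| ≤ (CM * S / t) * r := by
      calc |q.eval x - q.eval x₀| = |q.eval x₀ - q.eval x| := abs_sub_comm _ _
        _ ≤ (CM * S / t) * |x₀ - x| := by
            have := hLip x hxin x₀ hx₀mem
            linarith [this]
        _ ≤ (CM * S / t) * r := by
            apply mul_le_mul_of_nonneg_left _ (by positivity)
            rw [abs_sub_comm]; exact h2
    have h4 : (CM * S / t) * r = S/2 := by
      rw [hrdef]; field_simp
    rw [h4] at h3
    have := abs_le.mp h3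
    linarith [this.1]
  -- integer counting
  set a : ℤ := ⌊α⌋ with ha
  set b : ℤ := ⌊α + r⌋ with hb
  have hab : (b:ℝ) - a > r - 1 := by
    have h1 : (a:ℝ) ≤ α := Int.floor_le α
    have h2 : (α + r) - 1 < b := by
      have := Int.lt_floor_add_one (α + r)
      have h3 := Int.floor_le (α + r)
      linarith [Int.sub_one_lt_floor (α + r)]
    linarith
  set F : Finset ℕ := (Finset.range t).filter (fun j => α < (j:ℝ)+1 ∧ (j:ℝ)+1 ≤ α + r) with hF
  have hcard : (r - 1) ≤ (F.card : ℝ) := by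
    have hinj : ∀ n ∈ Finset.Ioc a b, (n - 1).toNat ∈ F := by
      intro n hn
      obtain ⟨hn1, hn2⟩ := Finset.mem_Ioc.mp hn
      have hn1' : α < (n:ℝ) := by
        have : (a:ℝ) < n := by exact_mod_cast hn1
        calc α < a + 1 := Int.lt_floor_add_one α
          _ ≤ n := by exact_mod_cast hn1
      have hn2' : (n:ℝ) ≤ α + r := by
        calc (n:ℝ) ≤ b := by exact_mod_cast hn2
          _ ≤ α + r := Int.floor_le _
      have ha0 : (0:ℤ) ≤ a := Int.floor_nonneg.mpr hα0
      have hnpos : 1 ≤ n := by omega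
      have hcast : ((n-1).toNat : ℝ) + 1 = (n:ℝ) := by
        have : ((n-1).toNat : ℤ) = n - 1 := Int.toNat_of_nonneg (by omega)
        have h5 : ((n-1).toNat : ℝ) = ((n:ℝ) - 1) := by exact_mod_cast this
        linarith
      rw [hF, Finset.mem_filter]
      refine ⟨Finset.mem_range.mpr ?_, by rw [hcast]; exact hn1', by rw [hcast]; exact hn2'⟩
      -- (n-1).toNat < t
      have : (n:ℝ) ≤ t := by linarith [hαrt]
      have hnt : n ≤ (t:ℤ) := by exact_mod_cast this
      omega
    have hcardle : Finset.card (Finset.Ioc a b) ≤ F.card := by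
      apply Finset.card_le_card_of_injOn (fun n => (n-1).toNat) (fun n hn => hinj n hn)
      intro x hx y hy hxy
      have hxy' : (x-1).toNat = (y-1).toNat := hxy
      have hx1 := (Finset.mem_Ioc.mp hx).1
      have hy1 := (Finset.mem_Ioc.mp hy).1
      have hfl := Int.floor_nonneg.mpr hα0
      omega
    have hc2 : ((Finset.Ioc a b).card : ℝ) = (b:ℝ) - a := by
      rw [Int.card_Ioc]
      have hba : a ≤ b := by
        apply Int.floor_le_floor
        linarith
      have h10 : ((b - a).toNat : ℤ) = b - a := Int.toNat_of_nonneg (by omega)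
      have h11 : (((b - a).toNat : ℤ) : ℝ) = ((b:ℝ) - a) := by exact_mod_cast congrArg (fun z : ℤ => (z:ℝ)) h10
      exact_mod_cast h11
    calc (r - 1) ≤ (b:ℝ) - a := le_of_lt hab
      _ = ((Finset.Ioc a b).card : ℝ) := hc2.symm
      _ ≤ (F.card : ℝ) := by exact_mod_cast hcardle
  -- sum lower bound
  have hsum : (F.card : ℝ) * (S/2) ≤ ∑ j ∈ Finset.range t, (p.eval ((j:ℝ)+1))^2 := by
    calc (F.card : ℝ) * (S/2) = ∑ _j ∈ F, (S/2) := by rw [Finset.sum_const, nsmul_eq_mul]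
      _ ≤ ∑ j ∈ F, (p.eval ((j:ℝ)+1))^2 := by
          apply Finset.sum_le_sum
          intro j hj
          rw [hF, Finset.mem_filter] at hj
          rw [← hqev]
          exact hbig _ ⟨le_of_lt hj.2.1, hj.2.2⟩
      _ ≤ ∑ j ∈ Finset.range t, (p.eval ((j:ℝ)+1))^2 := by
          apply Finset.sum_le_sum_of_subset_of_nonneg
          · rw [hF]; exact Finset.filter_subset _ _
          · intro j _ _; exact sq_nonneg _
  -- finish
  have hqs : q.eval (s:ℝ) ≤ S := by
    apply hx₀max
    constructor
    · positivity
    · exact_mod_cast hst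
  have hr1 : r/2 ≤ r - 1 := by linarith
  have hfin : 8*CM * ((r/2) * (S/2)) = (t:ℝ) * S := by
    rw [hrdef]
    field_simp
    ring
  calc (t:ℝ) * (p.eval (s:ℝ))^2 = (t:ℝ) * q.eval (s:ℝ) := by rw [hqev]
    _ ≤ (t:ℝ) * S := mul_le_mul_of_nonneg_left hqs (le_of_lt ht0)
    _ = 8*CM * ((r/2) * (S/2)) := hfin.symm
    _ ≤ 8*CM * ((F.card:ℝ) * (S/2)) := by
        apply mul_le_mul_of_nonneg_left _ (by linarith)
        apply mul_le_mul_of_nonneg_right _ (by linarith)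
        linarith [hcard, hr1]
    _ ≤ 8*CM * ∑ j ∈ Finset.range t, (p.eval ((j:ℝ)+1))^2 := by
        apply mul_le_mul_of_nonneg_left hsum (by linarith)

section MatrixLemmas
variable (k t : ℕ)

lemma design_inj (hkt : k + 1 ≤ t) (v : Fin (k+1) → ℝ)
    (hv : (designMatR t (k+1)).mulVec v = 0) : v = 0 := by
  set V : Matrix (Fin (k+1)) (Fin (k+1)) ℝ := Matrix.vandermonde (fun i : Fin (k+1) => ((i:ℕ)+1 : ℝ)) with hV
  have hdet : IsUnit V.det := by
    rw [hV, Matrix.det_vandermonde]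
    apply IsUnit.mk0
    apply Finset.prod_ne_zero_iff.mpr
    intro i _
    apply Finset.prod_ne_zero_iff.mpr
    intro j hj
    have hij : i < j := Finset.mem_Ioi.mp hj
    have : (i:ℕ) < (j:ℕ) := hij
    have h1 : ((i:ℕ):ℝ) < ((j:ℕ):ℝ) := by exact_mod_cast this
    intro hc; linarith [sub_eq_zero.mp hc]
  have hVv : V.mulVec v = 0 := by
    funext i
    have := congrFun hv (Fin.castLE hkt i)
    simp only [Matrix.mulVec, dotProduct, designMatR, Matrix.of_apply, Pi.zero_apply] at this ⊢
    rw [← this]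
    apply Finset.sum_congr rfl
    intro m _
    simp [hV, Matrix.vandermonde, Fin.castLE]
  have : v = (V⁻¹ * V).mulVec v := by rw [Matrix.nonsing_inv_mul V hdet]; simp
  rw [this, ← Matrix.mulVec_mulVec, hVv]
  simp

lemma gram_det (hkt : k + 1 ≤ t) :
    IsUnit ((designMatR t (k+1))ᵀ * designMatR t (k+1)).det := by
  set X := designMatR t (k+1) with hX
  rw [isUnit_iff_ne_zero]
  intro hdet
  obtain ⟨v, hv0, hv⟩ := (Matrix.exists_mulVec_eq_zero_iff).mpr hdet
  have h1 : v ⬝ᵥ (Xᵀ * X).mulVec v = 0 := by rw [hv]; simp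
  have h2 : v ⬝ᵥ (Xᵀ * X).mulVec v = (X.mulVec v) ⬝ᵥ (X.mulVec v) := by
    rw [← Matrix.mulVec_mulVec, Matrix.dotProduct_mulVec, Matrix.vecMul_transpose]
  have h3 : X.mulVec v = 0 := by
    rw [h2] at h1
    exact dotProduct_self_eq_zero.mp h1
  exact hv0 (design_inj k t hkt v h3)

/-- The hat (projection) matrix. -/
noncomputable def hatMat (k t : ℕ) : Matrix (Fin t) (Fin t) ℝ :=
  designMatR t (k+1) * ((designMatR t (k+1))ᵀ * designMatR t (k+1))⁻¹ * (designMatR t (k+1))ᵀ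

lemma recenter_eq (θ : Fin t → ℝ) (i : Fin t) :
    recenter k t θ i = θ i - (hatMat k t).mulVec θ i := by
  simp only [recenter, hatMat, Pi.sub_apply]
  rw [Matrix.mulVec_mulVec, Matrix.mulVec_mulVec]

lemma hatMat_transpose (hkt : k + 1 ≤ t) : (hatMat k t)ᵀ = hatMat k t := by
  set X := designMatR t (k+1) with hX
  simp only [hatMat, Matrix.transpose_mul, Matrix.transpose_transpose, Matrix.transpose_nonsing_inv]
  rw [Matrix.mul_assoc]

lemma hatMat_mul_design (hkt : k + 1 ≤ t) :
    hatMat k t * designMatR t (k+1) = designMatR t (k+1) := by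
  set X := designMatR t (k+1) with hX
  have h := Matrix.nonsing_inv_mul _ (gram_det k t hkt)
  show X * (Xᵀ * X)⁻¹ * Xᵀ * X = X
  rw [Matrix.mul_assoc (X * (Xᵀ * X)⁻¹) Xᵀ X, Matrix.mul_assoc X ((Xᵀ * X)⁻¹) (Xᵀ * X), h,
    Matrix.mul_one]

lemma hatMat_idem (hkt : k + 1 ≤ t) : hatMat k t * hatMat k t = hatMat k t := by
  set X := designMatR t (k+1) with hX
  have h := Matrix.nonsing_inv_mul _ (gram_det k t hkt)
  show (X * (Xᵀ * X)⁻¹ * Xᵀ) * (X * (Xᵀ * X)⁻¹ * Xᵀ) = X * (Xᵀ * X)⁻¹ * Xᵀ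
  calc (X * (Xᵀ * X)⁻¹ * Xᵀ) * (X * (Xᵀ * X)⁻¹ * Xᵀ)
      = X * ((Xᵀ * X)⁻¹ * ((Xᵀ * X) * ((Xᵀ * X)⁻¹ * Xᵀ))) := by
        simp only [Matrix.mul_assoc]
    _ = X * ((Xᵀ * X)⁻¹ * Xᵀ) := by
        rw [← Matrix.mul_assoc ((Xᵀ * X)⁻¹) (Xᵀ * X), h, Matrix.one_mul]
    _ = X * (Xᵀ * X)⁻¹ * Xᵀ := by rw [Matrix.mul_assoc]

lemma hatMat_diag_eq_sum_sq (hkt : k + 1 ≤ t) (i : Fin t) :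
    hatMat k t i i = ∑ j : Fin t, (hatMat k t i j)^2 := by
  conv_lhs => rw [← hatMat_idem k t hkt]
  rw [Matrix.mul_apply]
  apply Finset.sum_congr rfl
  intro j _
  have : hatMat k t j i = hatMat k t i j := by
    conv_lhs => rw [← hatMat_transpose k t hkt]
    rfl
  rw [this]; ring

lemma hatMat_diag_nonneg (hkt : k + 1 ≤ t) (i : Fin t) : 0 ≤ hatMat k t i i := by
  rw [hatMat_diag_eq_sum_sq k t hkt]
  exact Finset.sum_nonneg fun j _ => sq_nonneg _

lemma hatMat_diag_le_one (hkt : k + 1 ≤ t) (i : Fin t) : hatMat k t i i ≤ 1 := by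
  have h := hatMat_diag_eq_sum_sq k t hkt i
  have h2 : (hatMat k t i i)^2 ≤ hatMat k t i i := by
    conv_rhs => rw [h]
    exact Finset.single_le_sum (f := fun j => (hatMat k t i j)^2) (fun j _ => sq_nonneg _)
      (Finset.mem_univ i)
  nlinarith [hatMat_diag_nonneg k t hkt i]

lemma hatMat_kills (hkt : k + 1 ≤ t) (b : Fin (k+1) → ℝ) :
    (hatMat k t).mulVec ((designMatR t (k+1)).mulVec b) = (designMatR t (k+1)).mulVec b := by
  rw [Matrix.mulVec_mulVec, hatMat_mul_design k t hkt]

end MatrixLemmas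

lemma discrete_taylor (k : ℕ) : ∀ (f : ℕ → ℝ) (j : ℕ),
    f j = (∑ i ∈ Finset.range (k+1), (Nat.choose j i : ℝ) * diffOp^[i] f 0)
        + ∑ l ∈ Finset.range j, (Nat.choose (j-1-l) k : ℝ) * diffOp^[k+1] f l := by
  induction k with
  | zero =>
    intro f j
    have h1 : ∑ i ∈ Finset.range 1, (Nat.choose j i : ℝ) * diffOp^[i] f 0 = f 0 := by simp
    have h2 : ∑ l ∈ Finset.range j, (Nat.choose (j-1-l) 0 : ℝ) * diffOp^[1] f l
        = ∑ l ∈ Finset.range j, (f (l+1) - f l) := by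
      apply Finset.sum_congr rfl
      intro l _
      simp [diffOp]
    rw [h1, h2, Finset.sum_range_sub f j]; ring
  | succ k IH =>
    intro f j
    induction j with
    | zero =>
      simp only [Finset.range_zero, Finset.sum_empty, add_zero]
      rw [Finset.sum_eq_single 0]
      · simp
      · intro i _ hi
        rw [Nat.choose_eq_zero_of_lt (by omega)]
        simp
      · simp
    | succ j jh =>
      set g := diffOp f with hgdef
      set h := diffOp^[k+2] f with hhdef
      -- IH applied to g at j
      have ihg := IH g j
      have hg0 : ∀ s : ℕ, diffOp^[s] g = diffOp^[s+1] f := by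
        intro s; rw [hgdef, ← Function.iterate_succ_apply]
      have hgh : diffOp^[k+1] g = h := by rw [hgdef, hhdef, ← Function.iterate_succ_apply]
      rw [hgh] at ihg
      -- split the first sum at j+1
      have hA : ∑ i ∈ Finset.range (k+2), (Nat.choose (j+1) i : ℝ) * diffOp^[i] f 0
          = (∑ i ∈ Finset.range (k+2), (Nat.choose j i : ℝ) * diffOp^[i] f 0)
            + ∑ s ∈ Finset.range (k+1), (Nat.choose j s : ℝ) * diffOp^[s] g 0 := by
        have e1 : ∀ i ∈ Finset.range (k+2), (Nat.choose (j+1) i : ℝ) * diffOp^[i] f 0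
            = (Nat.choose j i : ℝ) * diffOp^[i] f 0
              + (if i = 0 then 0 else (Nat.choose j (i-1) : ℝ) * diffOp^[i] f 0) := by
          intro i _
          cases i with
          | zero => simp
          | succ s =>
            rw [if_neg (by omega)]
            have : Nat.choose (j+1) (s+1) = Nat.choose j s + Nat.choose j (s+1) :=
              Nat.choose_succ_succ j s
            push_cast [this]; ring
        rw [Finset.sum_congr rfl e1, Finset.sum_add_distrib]
        congr 1
        rw [Finset.sum_range_succ' (fun i => if i = 0 then (0:ℝ) else (Nat.choose j (i-1) : ℝ) * diffOp^[i] f 0) (k+1)]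
        simp only [if_neg (Nat.succ_ne_zero _), Nat.add_sub_cancel, if_pos rfl, if_true, add_zero]
        norm_num
        rfl

      -- split the second sum at j+1
      have hB : ∑ l ∈ Finset.range (j+1), (Nat.choose (j+1-1-l) (k+1) : ℝ) * h l
          = (∑ l ∈ Finset.range j, (Nat.choose (j-1-l) (k+1) : ℝ) * h l)
            + ∑ l ∈ Finset.range j, (Nat.choose (j-1-l) k : ℝ) * h l := by
        rw [Finset.sum_range_succ]
        have hlast : (Nat.choose (j+1-1-j) (k+1) : ℝ) * h j = 0 := by
          have : j+1-1-j = 0 := by omega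
          rw [this, Nat.choose_eq_zero_of_lt (by omega)]
          simp
        rw [hlast, add_zero]
        rw [← Finset.sum_add_distrib]
        apply Finset.sum_congr rfl
        intro l hl
        have hlj : l < j := Finset.mem_range.mp hl
        have e2 : j+1-1-l = (j-1-l) + 1 := by omega
        rw [e2, Nat.choose_succ_succ (j-1-l) k]
        push_cast; ring
      have hgj : g j = f (j+1) - f j := by rw [hgdef]; rfl
      rw [hA, hB]
      rw [hgj] at ihg
      linarith [jh, ihg]

lemma exists_poly_part (k : ℕ) (c : ℕ → ℝ) :
    ∃ b : Fin (k+1) → ℝ, ∀ j : ℕ,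
      (∑ i ∈ Finset.range (k+1), (Nat.choose j i : ℝ) * c i)
        = ∑ m : Fin (k+1), b m * ((j:ℝ)+1)^(m:ℕ) := by
  classical
  set r : Polynomial ℝ := ∑ i ∈ Finset.range (k+1), (C (c i / (Nat.factorial i)) * descPochhammer ℝ i) with hr
  have hrdeg : r.natDegree ≤ k := by
    apply Polynomial.natDegree_sum_le_of_forall_le
    intro i hi
    calc (C (c i / (Nat.factorial i)) * descPochhammer ℝ i).natDegree
        ≤ (C (c i / (Nat.factorial i))).natDegree + (descPochhammer ℝ i).natDegree :=
          natDegree_mul_le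
      _ ≤ 0 + i := by
          apply Nat.add_le_add (natDegree_C _).le
          rw [descPochhammer_natDegree]
      _ ≤ k := by simpa using Nat.lt_succ_iff.mp (Finset.mem_range.mp hi)
  have hreval : ∀ j : ℕ, r.eval (j:ℝ) = ∑ i ∈ Finset.range (k+1), (Nat.choose j i : ℝ) * c i := by
    intro j
    rw [hr, eval_finset_sum]
    apply Finset.sum_congr rfl
    intro i _
    rw [eval_mul, eval_C, descPochhammer_eval_eq_descFactorial ℝ j i,
      Nat.descFactorial_eq_factorial_mul_choose]
    have hfac : (Nat.factorial i : ℝ) ≠ 0 := by exact_mod_cast Nat.factorial_ne_zero i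
    push_cast
    field_simp
  set s : Polynomial ℝ := r.comp (X - C 1) with hs
  have hsdeg : s.natDegree ≤ k := by
    rw [hs, natDegree_comp]
    have : (X - C (1:ℝ)).natDegree = 1 := natDegree_X_sub_C 1
    rw [this, mul_one]
    exact hrdeg
  refine ⟨fun m => s.coeff m, ?_⟩
  intro j
  have h1 : s.eval ((j:ℝ)+1) = r.eval (j:ℝ) := by
    rw [hs, eval_comp]; norm_num
  rw [← hreval j, ← h1, s.eval_eq_sum_range' (Nat.lt_succ_of_le hsdeg)]
  rw [Finset.sum_range (fun m => s.coeff m * ((j:ℝ)+1)^m)]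

lemma eval_coeff_poly (k : ℕ) (a : Fin (k+1) → ℝ) (x : ℝ) :
    (∑ m : Fin (k+1), C (a m) * X^(m:ℕ) : Polynomial ℝ).eval x = ∑ m : Fin (k+1), a m * x^(m:ℕ) := by
  rw [eval_finset_sum]
  apply Finset.sum_congr rfl
  intro m _
  rw [eval_mul, eval_C, eval_pow, eval_X]

lemma coeff_poly_natDegree (k : ℕ) (a : Fin (k+1) → ℝ) :
    (∑ m : Fin (k+1), C (a m) * X^(m:ℕ) : Polynomial ℝ).natDegree ≤ k := by
  apply Polynomial.natDegree_sum_le_of_forall_le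
  intro m _
  calc (C (a m) * X^(m:ℕ)).natDegree ≤ (C (a m)).natDegree + (X^(m:ℕ) : Polynomial ℝ).natDegree :=
        natDegree_mul_le
    _ ≤ 0 + (m:ℕ) := Nat.add_le_add (natDegree_C _).le (natDegree_X_pow _).le
    _ ≤ k := by omega

lemma gram_inv_symm (k t : ℕ) :
    (((designMatR t (k+1))ᵀ * designMatR t (k+1))⁻¹)ᵀ
      = ((designMatR t (k+1))ᵀ * designMatR t (k+1))⁻¹ := by
  rw [Matrix.transpose_nonsing_inv]
  congr 1
  rw [Matrix.transpose_mul, Matrix.transpose_transpose]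

lemma leverage (k : ℕ) : ∃ CL : ℝ, 1 ≤ CL ∧
    ∀ t : ℕ, k + 2 ≤ t → ∀ i : Fin t, (t:ℝ) * hatMat k t i i ≤ CL := by
  obtain ⟨CN, T0, hCN1, hT01, hnik⟩ := exists_nikolskii k
  refine ⟨max CN T0, le_trans hCN1 (le_max_left _ _), ?_⟩
  intro t ht i
  have hkt : k + 1 ≤ t := by omega
  by_cases hcase : (t:ℝ) < T0
  · calc (t:ℝ) * hatMat k t i i ≤ (t:ℝ) * 1 :=
        mul_le_mul_of_nonneg_left (hatMat_diag_le_one k t hkt i) (by positivity)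
      _ = (t:ℝ) := mul_one _
      _ ≤ T0 := le_of_lt hcase
      _ ≤ max CN T0 := le_max_right _ _
  · push_neg at hcase
    set X' := designMatR t (k+1) with hX'
    set G := X'ᵀ * X' with hG
    set xi : Fin (k+1) → ℝ := fun m => X' i m with hxi
    set a : Fin (k+1) → ℝ := xi ᵥ* G⁻¹ with ha
    set v := hatMat k t i i with hv
    -- v = a ⬝ᵥ xi
    have hva : v = a ⬝ᵥ xi := by
      rw [hv, hatMat]
      rw [Matrix.mul_apply]
      rw [ha]
      simp only [Matrix.vecMul, dotProduct, Matrix.mul_apply, Matrix.transpose_apply]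
      rfl
    -- a ᵥ* ... : G *ᵥ a = xi
    have hGa : G *ᵥ a = xi := by
      rw [ha]
      have h1 : xi ᵥ* G⁻¹ = G⁻¹ *ᵥ xi := by
        rw [← Matrix.vecMul_transpose, gram_inv_symm]
      rw [h1, Matrix.mulVec_mulVec, Matrix.mul_nonsing_inv _ (gram_det k t hkt)]
      simp
    -- sum of squares equals v
    have hsq : ∑ j : Fin t, ((X' *ᵥ a) j)^2 = v := by
      have h2 : (X' *ᵥ a) ⬝ᵥ (X' *ᵥ a) = a ⬝ᵥ (G *ᵥ a) := by
        rw [hG, ← Matrix.mulVec_mulVec, Matrix.dotProduct_mulVec a X'ᵀ (X' *ᵥ a),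
          Matrix.vecMul_transpose]
      have h3 : (X' *ᵥ a) ⬝ᵥ (X' *ᵥ a) = ∑ j : Fin t, ((X' *ᵥ a) j)^2 := by
        simp [dotProduct, sq]
      rw [← h3, h2, hGa, hva, dotProduct_comm]
    -- the polynomial
    set p : Polynomial ℝ := ∑ m : Fin (k+1), C (a m) * X^(m:ℕ) with hp
    have hpev : ∀ j : ℕ, p.eval ((j:ℝ)+1) = ∑ m : Fin (k+1), a m * ((j:ℝ)+1)^(m:ℕ) := by
      intro j; rw [hp, eval_coeff_poly]
    have hXa : ∀ j : Fin t, (X' *ᵥ a) j = p.eval ((j:ℝ)+1) := by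
      intro j
      rw [hpev, hX']
      simp only [Matrix.mulVec, dotProduct, designMatR, Matrix.of_apply]
      apply Finset.sum_congr rfl
      intro m _
      ring
    have hvp : v = p.eval (((i:ℕ):ℝ)+1) := by
      rw [hva, hpev]
      rw [hxi, hX']
      simp only [dotProduct, designMatR, Matrix.of_apply]
    -- apply nikolskii with s = i+1
    have hnk := hnik t hcase p (coeff_poly_natDegree k a) ((i:ℕ)+1) (by omega) (by omega)
    have hcast : (((i:ℕ)+1 : ℕ) : ℝ) = ((i:ℕ):ℝ)+1 := by push_cast; ring
    rw [hcast, ← hvp] at hnk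
    have hsum2 : ∑ j ∈ Finset.range t, (p.eval ((j:ℝ)+1))^2 = v := by
      rw [← hsq]
      rw [Finset.sum_range (fun j => (p.eval ((j:ℝ)+1))^2)]
      apply Finset.sum_congr rfl
      intro j _
      rw [hXa]
    rw [hsum2] at hnk
    -- t * v^2 ≤ CN * v, v ≥ 0 ⟹ t * v ≤ CN
    have hv0 : 0 ≤ v := hatMat_diag_nonneg k t hkt i
    have ht0 : (0:ℝ) < t := by
      have : (1:ℝ) ≤ t := by exact_mod_cast (by omega : 1 ≤ t)
      linarith
    rcases eq_or_lt_of_le hv0 with heq | hlt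
    · rw [← heq]
      calc (t:ℝ) * 0 = 0 := mul_zero _
        _ ≤ max CN T0 := by positivity
    · have : (t:ℝ) * v ≤ CN := by
        have hmul : ((t:ℝ) * v) * v ≤ CN * v := by nlinarith [hnk]
        exact le_of_mul_le_mul_right hmul hlt
      exact le_trans this (le_max_left _ _)

end Aux

/-- Sup-norm bound on the OLS residual in terms of the `TV^k`
distance: `‖recenter(θ)‖_∞ ≤ c_k · t^k ‖D^{k+1}θ‖₁` for `t ≥ k + 2`, where `c_k > 0`
depends only on `k`. -/
theorem stmt4 (k : ℕ) :
    ∃ c : ℝ, 0 < c ∧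
      ∀ t : ℕ, k + 2 ≤ t → ∀ θ : Fin t → ℝ, ∀ i : Fin t,
        |recenter k t θ i| ≤ c * (t : ℝ) ^ k * tvNorm k t θ := by
  obtain ⟨CL, hCL1, hlev⟩ := leverage k
  have hCL0 : (0:ℝ) ≤ CL := by linarith
  refine ⟨1 + Real.sqrt CL, by positivity, ?_⟩
  intro t ht θ i
  have hkt : k + 1 ≤ t := by omega
  set f : ℕ → ℝ := fun i => if h : i < t then θ ⟨i, h⟩ else 0 with hf
  set TV := tvNorm k t θ with hTV
  have hTVdef : TV = ∑ l ∈ Finset.range (t-(k+1)), |diffOp^[k+1] f l| := rfl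
  have hTV0 : 0 ≤ TV := by
    rw [hTVdef]; exact Finset.sum_nonneg fun l _ => abs_nonneg _
  set B := (t:ℝ)^k * TV with hB
  have hB0 : 0 ≤ B := by
    rw [hB]; positivity
  obtain ⟨b, hb⟩ := exists_poly_part k (fun i => diffOp^[i] f 0)
  set w : Fin t → ℝ :=
    fun j => ∑ l ∈ Finset.range (j:ℕ), (Nat.choose ((j:ℕ)-1-l) k : ℝ) * diffOp^[k+1] f l with hw
  -- decomposition
  have hθw : ∀ j : Fin t, θ j = (designMatR t (k+1)).mulVec b j + w j := by
    intro j
    have h1 := discrete_taylor k f (j:ℕ)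
    have h2 : f (j:ℕ) = θ j := by rw [hf]; simp only [j.isLt, dif_pos]
    rw [h2] at h1
    rw [h1, hb (j:ℕ)]
    congr 1
    simp only [Matrix.mulVec, dotProduct, designMatR, Matrix.of_apply]
    apply Finset.sum_congr rfl
    intro m _
    ring
  -- sup bound on w
  have hwb : ∀ j : Fin t, |w j| ≤ B := by
    intro j
    rw [hw, hB]
    set dh : ℕ → ℝ := fun l => diffOp^[k+1] f l with hdh
    calc |∑ l ∈ Finset.range (j:ℕ), (Nat.choose ((j:ℕ)-1-l) k : ℝ) * dh l|
        ≤ ∑ l ∈ Finset.range (j:ℕ), |(Nat.choose ((j:ℕ)-1-l) k : ℝ) * dh l| :=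
          Finset.abs_sum_le_sum_abs _ _
      _ = ∑ l ∈ Finset.range (j:ℕ), (Nat.choose ((j:ℕ)-1-l) k : ℝ) * |dh l| := by
          apply Finset.sum_congr rfl
          intro l _
          rw [abs_mul, abs_of_nonneg (by positivity)]
      _ = ∑ l ∈ Finset.range (j:ℕ) ∩ Finset.range (t-(k+1)),
            (Nat.choose ((j:ℕ)-1-l) k : ℝ) * |dh l| := by
          symm
          apply Finset.sum_subset Finset.inter_subset_left
          intro l hl hnl
          have hl1 : l < (j:ℕ) := Finset.mem_range.mp hl
          have hl2 : ¬ l < t - (k+1) := by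
            intro hc
            exact hnl (Finset.mem_inter.mpr ⟨hl, Finset.mem_range.mpr hc⟩)
          have hj := j.isLt
          have hch : Nat.choose ((j:ℕ)-1-l) k = 0 :=
            Nat.choose_eq_zero_of_lt (by omega)
          rw [hch]
          simp
      _ ≤ ∑ l ∈ Finset.range (t-(k+1)), (t:ℝ)^k * |dh l| := by
          apply Finset.sum_le_sum_of_subset_of_nonneg Finset.inter_subset_right
            (fun l _ _ => by positivity) |>.trans'
          apply Finset.sum_le_sum
          intro l hl
          apply mul_le_mul_of_nonneg_right _ (abs_nonneg _)
          have hn : (j:ℕ)-1-l ≤ t := by omega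
          calc (Nat.choose ((j:ℕ)-1-l) k : ℝ) ≤ ((((j:ℕ)-1-l)^k : ℕ) : ℝ) := by
                exact_mod_cast (Nat.choose_le_descFactorial _ _).trans (Nat.descFactorial_le_pow _ _)
            _ ≤ ((t^k : ℕ) : ℝ) := by exact_mod_cast Nat.pow_le_pow_left hn k
            _ = (t:ℝ)^k := by push_cast; ring
      _ = (t:ℝ)^k * TV := by
          rw [hTVdef, Finset.mul_sum]
  -- recenter in terms of w
  set P := hatMat k t with hP
  have hθdecomp : θ = (designMatR t (k+1)).mulVec b + w := funext hθw
  have hrec : recenter k t θ i = w i - (P.mulVec w) i := by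
    rw [recenter_eq k t θ i]
    conv_lhs => rw [hθdecomp]
    rw [Matrix.mulVec_add, hP, hatMat_kills k t hkt b]
    simp only [Pi.add_apply]
    ring
  -- Cauchy-Schwarz
  have hcs : ((P.mulVec w) i)^2 ≤ (∑ j : Fin t, (P i j)^2) * (∑ j : Fin t, (w j)^2) := by
    have hPw : (P.mulVec w) i = ∑ j : Fin t, P i j * w j := rfl
    rw [hPw]
    exact Finset.sum_mul_sq_le_sq_mul_sq Finset.univ _ _
  have h1 : ∑ j : Fin t, (P i j)^2 = P i i := (hatMat_diag_eq_sum_sq k t hkt i).symm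
  have h2 : ∑ j : Fin t, (w j)^2 ≤ (t:ℝ) * B^2 := by
    calc ∑ j : Fin t, (w j)^2 ≤ ∑ _j : Fin t, B^2 := by
          apply Finset.sum_le_sum
          intro j _
          calc (w j)^2 = |w j|^2 := (sq_abs _).symm
            _ ≤ B^2 := by
                apply pow_le_pow_left₀ (abs_nonneg _) (hwb j)
      _ = (t:ℝ) * B^2 := by
          rw [Finset.sum_const, Finset.card_univ, Fintype.card_fin, nsmul_eq_mul]
  have h3 : ((P.mulVec w) i)^2 ≤ CL * B^2 := by
    calc ((P.mulVec w) i)^2 ≤ (∑ j : Fin t, (P i j)^2) * (∑ j : Fin t, (w j)^2) := hcs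
      _ = P i i * (∑ j : Fin t, (w j)^2) := by rw [h1]
      _ ≤ P i i * ((t:ℝ) * B^2) :=
          mul_le_mul_of_nonneg_left h2 (hatMat_diag_nonneg k t hkt i)
      _ = ((t:ℝ) * P i i) * B^2 := by ring
      _ ≤ CL * B^2 := by
          apply mul_le_mul_of_nonneg_right (hlev t ht i) (sq_nonneg _)
  have h4 : |(P.mulVec w) i| ≤ Real.sqrt CL * B := by
    rw [← Real.sqrt_sq_eq_abs]
    calc Real.sqrt (((P.mulVec w) i)^2) ≤ Real.sqrt (CL * B^2) := Real.sqrt_le_sqrt h3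
      _ = Real.sqrt CL * B := by rw [Real.sqrt_mul hCL0, Real.sqrt_sq hB0]
  calc |recenter k t θ i| = |w i - (P.mulVec w) i| := by rw [hrec]
    _ ≤ |w i| + |(P.mulVec w) i| := abs_sub _ _
    _ ≤ B + Real.sqrt CL * B := add_le_add (hwb i) h4
    _ = (1 + Real.sqrt CL) * ((t:ℝ)^k * TV) := by rw [hB]; ring
    _ = (1 + Real.sqrt CL) * (t:ℝ)^k * TV := by ring
end

section
/- Let d ≥ 1 and let x_1,…,x_n ∈ ℝ^d satisfy ‖x_t‖₂ ≤ X for all t. Set A_t = I_d + Σ_{s=1}^{t} x_s x_sᵀ. Then Σ_{t=1}^{n} x_tᵀ A_t^{-1} x_t ≤ d · log(1 + n X² / d). -/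
open Matrix

/-- `A_t = I_d + Σ_{s=1}^{t} x_s x_sᵀ` (0-based: sum over `s ≤ t`). -/
noncomputable def vawA {d n : ℕ} (x : Fin n → Fin d → ℝ) (t : Fin n) :
    Matrix (Fin d) (Fin d) ℝ :=
  1 + ∑ s ∈ Finset.Iic t, Matrix.vecMulVec (x s) (x s)

namespace VawAux


variable {d : ℕ}

lemma vecMulVec_mulVec (w v y : Fin d → ℝ) :
    Matrix.vecMulVec w v *ᵥ y = (v ⬝ᵥ y) • w := by
  ext i
  simp only [Matrix.mulVec, dotProduct, Matrix.vecMulVec_apply, Pi.smul_apply,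
    smul_eq_mul, Finset.sum_mul]
  exact Finset.sum_congr rfl fun j _ => by ring

lemma posSemidef_vecMulVec_self (w : Fin d → ℝ) : (Matrix.vecMulVec w w).PosSemidef := by
  refine Matrix.PosSemidef.of_dotProduct_mulVec_nonneg ?_ ?_
  · ext i j
    simp [Matrix.conjTranspose_apply, Matrix.vecMulVec_apply, mul_comm]
  · intro y
    rw [vecMulVec_mulVec]
    simp only [star_trivial, dotProduct_smul, smul_eq_mul]
    rw [dotProduct_comm]
    exact mul_self_nonneg _

lemma step (P : Matrix (Fin d) (Fin d) ℝ) (hP : P.PosDef) (u : Fin d → ℝ) :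
    u ⬝ᵥ ((P + Matrix.vecMulVec u u)⁻¹ *ᵥ u) ≤
      Real.log (P + Matrix.vecMulVec u u).det - Real.log P.det := by
  set q := u ⬝ᵥ (P⁻¹ *ᵥ u) with hqdef
  have hq : 0 ≤ q := by
    have := hP.inv.posSemidef.dotProduct_mulVec_nonneg u
    simpa using this
  have h1q : (0:ℝ) < 1 + q := by linarith
  have hA : (P + Matrix.vecMulVec u u).PosDef :=
    hP.add_posSemidef (posSemidef_vecMulVec_self u)
  -- determinant lemma
  have hdet : (P + Matrix.vecMulVec u u).det = P.det * (1 + q) := by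
    rw [Matrix.vecMulVec_eq Unit, Matrix.det_add_replicateCol_mul_replicateRow hP.det_pos.ne'.isUnit u u]
    congr 1
    rw [Matrix.det_unique]
    simp only [Matrix.add_apply, Matrix.one_apply_eq, Matrix.mul_apply, Matrix.replicateRow_apply,
      Matrix.replicateCol_apply, hqdef, Matrix.mulVec, dotProduct]
    simp only [Finset.sum_mul, Finset.mul_sum]
    rw [Finset.sum_comm]
    congr 1
    exact Finset.sum_congr rfl fun j _ => Finset.sum_congr rfl fun k _ => by ring
  have hPinv : P * P⁻¹ = 1 := Matrix.mul_nonsing_inv P hP.det_pos.ne'.isUnit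
  have hAinv : (P + Matrix.vecMulVec u u)⁻¹ *ᵥ u = (1 + q)⁻¹ • (P⁻¹ *ᵥ u) := by
    have hAp : (P + Matrix.vecMulVec u u) *ᵥ ((1 + q)⁻¹ • (P⁻¹ *ᵥ u)) = u := by
      rw [Matrix.mulVec_smul, Matrix.add_mulVec, Matrix.mulVec_mulVec, hPinv,
        Matrix.one_mulVec, vecMulVec_mulVec, ← hqdef]
      rw [smul_add, smul_smul, ← add_smul]
      have h : (1 + q)⁻¹ + (1 + q)⁻¹ * q = 1 := by field_simp
      rw [h, one_smul]
    calc (P + Matrix.vecMulVec u u)⁻¹ *ᵥ u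
        = (P + Matrix.vecMulVec u u)⁻¹ *ᵥ
            ((P + Matrix.vecMulVec u u) *ᵥ ((1 + q)⁻¹ • (P⁻¹ *ᵥ u))) := by rw [hAp]
      _ = (1 + q)⁻¹ • (P⁻¹ *ᵥ u) := by
          rw [Matrix.mulVec_mulVec, Matrix.nonsing_inv_mul _ hA.det_pos.ne'.isUnit,
            Matrix.one_mulVec]
  rw [hAinv, hdet, Real.log_mul hP.det_pos.ne' h1q.ne']
  have hterm : u ⬝ᵥ (1 + q)⁻¹ • (P⁻¹ *ᵥ u) = 1 - (1 + q)⁻¹ := by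
    rw [dotProduct_smul, smul_eq_mul, ← hqdef]
    field_simp
    ring
  rw [hterm]
  have hlog := Real.log_le_sub_one_of_pos (inv_pos.mpr h1q)
  rw [Real.log_inv] at hlog
  linarith

lemma trace_eq_sum_eigenvalues (A : Matrix (Fin d) (Fin d) ℝ) (hH : A.IsHermitian) :
    A.trace = ∑ i, hH.eigenvalues i := by
  simpa using hH.trace_eq_sum_eigenvalues

lemma log_det_le (hd : 1 ≤ d) (A : Matrix (Fin d) (Fin d) ℝ) (hA : A.PosDef) :
    Real.log A.det ≤ (d : ℝ) * Real.log (A.trace / d) := by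
  have hd0 : (0:ℝ) < d := by exact_mod_cast hd
  set μ := hA.isHermitian.eigenvalues with hμ
  have hμpos : ∀ i, 0 < μ i := fun i => hA.eigenvalues_pos i
  have hdet : A.det = ∏ i, μ i := by
    rw [hA.isHermitian.det_eq_prod_eigenvalues]
    norm_cast
  have htr : A.trace = ∑ i, μ i := trace_eq_sum_eigenvalues A hA.isHermitian
  -- AM-GM
  have hgm : ∏ i, (μ i) ^ ((d:ℝ)⁻¹) ≤ ∑ i : Fin d, (d:ℝ)⁻¹ * μ i := by
    apply Real.geom_mean_le_arith_mean_weighted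
    · intro i _; positivity
    · simp [Finset.sum_const, mul_inv_cancel₀ hd0.ne']
    · intro i _; exact (hμpos i).le
  have hrhs : ∑ i : Fin d, (d:ℝ)⁻¹ * μ i = A.trace / d := by
    rw [htr, ← Finset.mul_sum]; ring
  have hgpos : (0:ℝ) < ∏ i, (μ i) ^ ((d:ℝ)⁻¹) := by
    apply Finset.prod_pos
    intro i _
    exact Real.rpow_pos_of_pos (hμpos i) _
  have hlog : Real.log (∏ i, (μ i) ^ ((d:ℝ)⁻¹)) ≤ Real.log (A.trace / d) := by
    apply Real.log_le_log hgpos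
    rw [← hrhs]; exact hgm
  have hlogprod : Real.log (∏ i, (μ i) ^ ((d:ℝ)⁻¹)) = (d:ℝ)⁻¹ * Real.log A.det := by
    rw [Real.log_prod (fun i _ => (Real.rpow_pos_of_pos (hμpos i) _).ne')]
    rw [hdet, Real.log_prod (fun i _ => (hμpos i).ne'), Finset.mul_sum]
    exact Finset.sum_congr rfl fun i _ => Real.log_rpow (hμpos i) _
  rw [hlogprod] at hlog
  calc Real.log A.det = (d:ℝ) * ((d:ℝ)⁻¹ * Real.log A.det) := by
        field_simp
    _ ≤ (d:ℝ) * Real.log (A.trace / d) := by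
        exact mul_le_mul_of_nonneg_left hlog hd0.le

end VawAux

/-- If `‖x_t‖₂ ≤ X` for all `t`, then
`Σ_{t=1}^n x_tᵀ A_t⁻¹ x_t ≤ d · log(1 + n X² / d)`. -/
theorem stmt6 (d n : ℕ) (hd : 1 ≤ d) (X : ℝ)
    (x : Fin n → Fin d → ℝ) (hx : ∀ t, Real.sqrt (∑ i, (x t i) ^ 2) ≤ X) :
    ∑ t, x t ⬝ᵥ (vawA x t)⁻¹.mulVec (x t) ≤
      (d : ℝ) * Real.log (1 + (n : ℝ) * X ^ 2 / (d : ℝ)) := by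
  classical
  have hd0 : (0:ℝ) < d := by exact_mod_cast hd
  have hPSD : ∀ S : Finset (Fin n),
      (∑ s ∈ S, Matrix.vecMulVec (x s) (x s)).PosSemidef := by
    intro S
    refine Finset.sum_induction _ _ (fun a b ha hb => ha.add hb) ?_
      (fun s _ => VawAux.posSemidef_vecMulVec_self _)
    exact ⟨Matrix.isHermitian_zero, fun y => by simp⟩
  have hPD : ∀ S : Finset (Fin n),
      (1 + ∑ s ∈ S, Matrix.vecMulVec (x s) (x s)).PosDef :=
    fun S => Matrix.PosDef.one.add_posSemidef (hPSD S)
  set f : ℕ → ℝ := fun k =>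
    Real.log (Matrix.det (1 + ∑ s ∈ Finset.univ.filter (fun s : Fin n => (s:ℕ) < k),
      Matrix.vecMulVec (x s) (x s))) with hf
  have hstep : ∀ t : Fin n,
      x t ⬝ᵥ (vawA x t)⁻¹.mulVec (x t) ≤ f ((t:ℕ)+1) - f (t:ℕ) := by
    intro t
    have h1 : Finset.univ.filter (fun s : Fin n => (s:ℕ) < (t:ℕ)) = Finset.Iio t := by
      ext s
      simp only [Finset.mem_filter, Finset.mem_univ, true_and, Finset.mem_Iio]
      exact (Fin.lt_iff_val_lt_val).symm
    have h2 : Finset.univ.filter (fun s : Fin n => (s:ℕ) < (t:ℕ)+1) = Finset.Iic t := by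
      ext s
      simp only [Finset.mem_filter, Finset.mem_univ, true_and, Finset.mem_Iic]
      rw [Nat.lt_succ_iff]
      exact (Fin.le_iff_val_le_val).symm
    have hsplit : vawA x t
        = (1 + ∑ s ∈ Finset.Iio t, Matrix.vecMulVec (x s) (x s))
          + Matrix.vecMulVec (x t) (x t) := by
      rw [vawA, ← Finset.Iio_insert, Finset.sum_insert (by simp)]
      abel
    have hP : (1 + ∑ s ∈ Finset.Iio t, Matrix.vecMulVec (x s) (x s)).PosDef := hPD _
    have := VawAux.step _ hP (x t)
    simp only [hf, h1, h2]
    have hvAeq : (1 + ∑ s ∈ Finset.Iic t, Matrix.vecMulVec (x s) (x s)) = vawA x t := rfl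
    rw [hvAeq, hsplit]
    exact this
  calc ∑ t, x t ⬝ᵥ (vawA x t)⁻¹.mulVec (x t)
      ≤ ∑ t : Fin n, (f ((t:ℕ)+1) - f (t:ℕ)) := Finset.sum_le_sum fun t _ => hstep t
    _ = f n - f 0 := by
        rw [Fin.sum_univ_eq_sum_range (fun k => f (k+1) - f k) n]
        exact Finset.sum_range_sub f n
    _ = f n := by
        have : Finset.univ.filter (fun s : Fin n => (s:ℕ) < 0) = (∅ : Finset (Fin n)) := by
          simp
        simp [hf, this]
    _ ≤ (d : ℝ) * Real.log (1 + (n : ℝ) * X ^ 2 / (d : ℝ)) := by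
        have huniv : Finset.univ.filter (fun s : Fin n => (s:ℕ) < n) = Finset.univ := by
          ext s; simp [s.is_lt]
        set A : Matrix (Fin d) (Fin d) ℝ :=
          1 + ∑ s : Fin n, Matrix.vecMulVec (x s) (x s) with hA
        have hfn : f n = Real.log A.det := by rw [hf]; simp only [huniv, hA]
        have hApd : A.PosDef := hPD Finset.univ
        have hxsq : ∀ s : Fin n, ∑ i, (x s i) ^ 2 ≤ X ^ 2 := by
          intro s
          have h0 : (0:ℝ) ≤ ∑ i, (x s i) ^ 2 :=
            Finset.sum_nonneg fun i _ => sq_nonneg _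
          calc ∑ i, (x s i) ^ 2 = (Real.sqrt (∑ i, (x s i) ^ 2)) ^ 2 :=
                (Real.sq_sqrt h0).symm
            _ ≤ X ^ 2 := pow_le_pow_left₀ (Real.sqrt_nonneg _) (hx s) 2
        have htrace : A.trace = (d : ℝ) + ∑ s : Fin n, ∑ i, (x s i) ^ 2 := by
          rw [hA, Matrix.trace_add, Matrix.trace_one, Matrix.trace_sum]
          simp [Matrix.trace, Matrix.diag, Matrix.vecMulVec_apply, sq]
        have htr_le : A.trace ≤ (d : ℝ) + n * X ^ 2 := by
          rw [htrace]
          have : ∑ s : Fin n, ∑ i, (x s i) ^ 2 ≤ ∑ s : Fin n, X ^ 2 :=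
            Finset.sum_le_sum fun s _ => hxsq s
          simp only [Finset.sum_const, Finset.card_univ, Fintype.card_fin,
            nsmul_eq_mul] at this
          linarith
        have htrpos : (0:ℝ) < A.trace := by
          rw [htrace]
          have : (0:ℝ) ≤ ∑ s : Fin n, ∑ i, (x s i) ^ 2 :=
            Finset.sum_nonneg fun s _ => Finset.sum_nonneg fun i _ => sq_nonneg _
          linarith
        have h1 := VawAux.log_det_le hd A hApd
        have h2 : Real.log (A.trace / d) ≤ Real.log (1 + (n : ℝ) * X ^ 2 / d) := by
          apply Real.log_le_log (div_pos htrpos hd0)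
          rw [div_le_iff₀ hd0]
          have : (1 + (n : ℝ) * X ^ 2 / d) * d = d + n * X ^ 2 := by field_simp
          rw [this]
          exact htr_le
        rw [hfn]
        calc Real.log A.det ≤ (d:ℝ) * Real.log (A.trace / d) := h1
          _ ≤ (d:ℝ) * Real.log (1 + (n : ℝ) * X ^ 2 / d) :=
            mul_le_mul_of_nonneg_left h2 hd0.le
end

section
/- Let λ ≥ 0 and let α, z ∈ ℝ^n with |z_i| ≤ λ for every i. Then Σ_{i=1}^n (T_λ(α_i + z_i) − α_i)² ≤ Σ_{i=1}^n min{ α_i², 4λ² }. In particular, if α has at most s nonzero coordinates (‖α‖₀ ≤ s), then ‖T_λ(α + z) − α‖₂² ≤ 4 s λ². -/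
/-- Soft-thresholding operator `T_λ(x) = sign(x) · max(|x| − λ, 0)`. -/
noncomputable def softThreshold (lam x : ℝ) : ℝ := Real.sign x * max (|x| - lam) 0

lemma key (lam a z : ℝ) (hlam : 0 ≤ lam) (hz : |z| ≤ lam) :
    (softThreshold lam (a + z) - a) ^ 2 ≤ min (a ^ 2) (4 * lam ^ 2) := by
  have hz1 : -lam ≤ z := neg_le_of_abs_le hz
  have hz2 : z ≤ lam := le_of_abs_le hz
  unfold softThreshold
  rcases lt_trichotomy (a + z) 0 with h | h | h
  · rw [Real.sign_of_neg h, abs_of_neg h]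
    rcases le_or_gt (-(a + z) - lam) 0 with h2 | h2
    · rw [max_eq_right h2, le_min_iff]
      constructor <;> nlinarith
    · rw [max_eq_left h2.le, le_min_iff]
      constructor <;> nlinarith
  · rw [le_min_iff]
    have ha : a = -z := by linarith
    simp [h, ha]
    nlinarith
  · rw [Real.sign_of_pos h, abs_of_pos h]
    rcases le_or_gt ((a + z) - lam) 0 with h2 | h2
    · rw [max_eq_right h2, le_min_iff]
      constructor <;> nlinarith
    · rw [max_eq_left h2.le, le_min_iff]
      constructor <;> nlinarith

/-- Coordinatewise soft-thresholding error bound, and the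
exact-sparsity consequence. -/
theorem stmt10 (n : ℕ) (lam : ℝ) (hlam : 0 ≤ lam) (α z : Fin n → ℝ)
    (hz : ∀ i, |z i| ≤ lam) :
    (∑ i, (softThreshold lam (α i + z i) - α i) ^ 2 ≤
      ∑ i, min ((α i) ^ 2) (4 * lam ^ 2)) ∧
    (∀ s : ℕ, (Finset.univ.filter fun i => α i ≠ 0).card ≤ s →
      ∑ i, (softThreshold lam (α i + z i) - α i) ^ 2 ≤ 4 * s * lam ^ 2) := by
  have h1 : ∑ i, (softThreshold lam (α i + z i) - α i) ^ 2 ≤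
      ∑ i, min ((α i) ^ 2) (4 * lam ^ 2) :=
    Finset.sum_le_sum fun i _ => key lam (α i) (z i) hlam (hz i)
  refine ⟨h1, fun s hs => ?_⟩
  have h2 : ∑ i, min ((α i) ^ 2) (4 * lam ^ 2) ≤ 4 * s * lam ^ 2 := by
    rw [← Finset.sum_filter_of_ne (p := fun i => α i ≠ 0)
      (by intro i _ hne h0; apply hne; simp [h0, min_eq_left, sq_nonneg, mul_nonneg,
        show (0:ℝ) ≤ 4 * lam ^ 2 by positivity])]
    calc ∑ i ∈ Finset.univ.filter (fun i => α i ≠ 0), min ((α i) ^ 2) (4 * lam ^ 2)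
        ≤ ∑ _i ∈ Finset.univ.filter (fun i => α i ≠ 0), 4 * lam ^ 2 :=
          Finset.sum_le_sum fun i _ => min_le_right _ _
      _ = (Finset.univ.filter (fun i => α i ≠ 0)).card * (4 * lam ^ 2) := by
          rw [Finset.sum_const, nsmul_eq_mul]
      _ ≤ s * (4 * lam ^ 2) := by
          apply mul_le_mul_of_nonneg_right _ (by positivity)
          exact_mod_cast hs
      _ = 4 * s * lam ^ 2 := by ring
  linarith
end

section
/- Fix an integer m ≥ 1. There exists a rational constant c_m > 0, depending only on m, such that for every natural number t, det(X_tᵀ X_t) = c_m · t^m · ∏_{i=2}^{m} ( t² − (i−1)² )^{m−i+1}, where X_t is the t × m matrix whose j-th row (j = 1,…,t) is (1, j, j², …, j^{m−1}). -/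
open Matrix

/-- The `t × m` polynomial design matrix whose `j`-th row (`j = 1,…,t`,
here 0-based `j+1`) is `(1, j, j², …, j^{m−1})`, over `ℚ`. -/
noncomputable def designMatQ (t m : ℕ) : Matrix (Fin t) (Fin m) ℚ :=
  Matrix.of fun j i => ((j : ℕ) + 1 : ℚ) ^ (i : ℕ)

open Polynomial Finset Module

/-- Faulhaber polynomial: `Sp p` evaluated at `t : ℕ` equals `∑_{j=1}^t j^p`. -/
noncomputable def Sp (p : ℕ) : ℚ[X] :=
  C (((p : ℚ) + 1)⁻¹) * ((Polynomial.bernoulli (p + 1)).comp (X + 1) - C (_root_.bernoulli (p + 1)))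
    - (if p = 0 then 1 else 0)

lemma Sp_eval (p t : ℕ) : (Sp p).eval (t : ℚ) = ∑ n ∈ range t, ((n : ℚ) + 1) ^ p := by
  have h := Polynomial.bernoulli_succ_eval (t + 1) p
  have hp1 : ((p : ℚ) + 1) ≠ 0 := by positivity
  have hsum : ∑ k ∈ range (t + 1), (k : ℚ) ^ p
      = (∑ n ∈ range t, ((n : ℚ) + 1) ^ p) + (0 : ℚ) ^ p := by
    rw [Finset.sum_range_succ']
    push_cast
    rw [add_comm]
  simp only [Sp, eval_sub, eval_mul, eval_C, eval_comp, eval_add, eval_X, eval_one]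
  rw [show ((t : ℚ) + 1) = ((t + 1 : ℕ) : ℚ) by push_cast; ring, h, hsum]
  rcases Nat.eq_zero_or_pos p with hp | hp
  · subst hp; simp
  · have : (0 : ℚ) ^ p = 0 := zero_pow hp.ne'
    rw [this, if_neg hp.ne']
    rw [eval_zero]
    field_simp
    ring

lemma Sp_natDegree (p : ℕ) : (Sp p).natDegree ≤ p + 1 := by
  have hb : (Polynomial.bernoulli (p + 1)).natDegree ≤ p + 1 := by
    unfold Polynomial.bernoulli
    refine (natDegree_sum_le _ _).trans ?_
    rw [Finset.fold_max_le]
    refine ⟨Nat.zero_le _, fun i _ => (natDegree_monomial_le _).trans ?_⟩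
    omega
  have hcomp : ((Polynomial.bernoulli (p + 1)).comp (X + 1)).natDegree ≤ p + 1 := by
    refine (natDegree_comp_le).trans ?_
    have : (X + 1 : ℚ[X]).natDegree ≤ 1 := (natDegree_add_le _ _).trans (by simp)
    calc (Polynomial.bernoulli (p+1)).natDegree * (X + 1 : ℚ[X]).natDegree
        ≤ (p+1) * 1 := Nat.mul_le_mul hb this
      _ = p + 1 := by ring
  unfold Sp
  refine (natDegree_sub_le _ _).trans ?_
  simp only [max_le_iff]
  constructor
  · refine (natDegree_C_mul_le _ _).trans ?_
    exact (natDegree_sub_le _ _).trans (by simp [hcomp])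
  · split <;> simp

lemma Sp_zero : Sp 0 = X := by
  apply Polynomial.eq_of_infinite_eval_eq
  apply Set.infinite_of_injective_forall_mem (f := fun t : ℕ => (t : ℚ))
  case hi => exact fun a b h => Nat.cast_injective h
  intro t
  simp only [Set.mem_setOf_eq, Sp_eval, eval_X]
  simp

/-- difference equation as a polynomial identity -/
lemma Sp_diff (p : ℕ) : (Sp p).comp (X + 1) - Sp p = (X + 1) ^ p := by
  apply Polynomial.eq_of_infinite_eval_eq
  apply Set.infinite_of_injective_forall_mem (f := fun t : ℕ => (t : ℚ))
  case hi => exact fun a b h => Nat.cast_injective h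
  intro t
  simp only [Set.mem_setOf_eq, eval_sub, eval_comp, eval_add, eval_X, eval_one]
  rw [show ((t : ℚ) + 1) = ((t + 1 : ℕ) : ℚ) by push_cast; ring, Sp_eval, Sp_eval,
    Finset.sum_range_succ]
  rw [eval_pow, eval_add, eval_X, eval_one]
  push_cast
  ring

lemma Sp_eval_add_one (x : ℚ) (p : ℕ) : (Sp p).eval (x + 1) = (Sp p).eval x + (x + 1) ^ p := by
  have := congrArg (eval x) (Sp_diff p)
  simp only [eval_sub, eval_comp, eval_add, eval_X, eval_one, eval_pow] at this
  linarith

lemma Sp_eval_neg (p : ℕ) (hp : 1 ≤ p) (k : ℕ) (hk : 1 ≤ k) :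
    (Sp p).eval (-(k : ℚ)) = (-1) ^ (p + 1) * (Sp p).eval ((k : ℚ) - 1) := by
  induction k with
  | zero => omega
  | succ k ih =>
    rcases Nat.eq_zero_or_pos k with hk0 | hk0
    · subst hk0
      have h0 : (Sp p).eval 0 = 0 := by
        have := Sp_eval p 0; simpa using this
      have h1 : (Sp p).eval (-1 + 1) = (Sp p).eval (-1) + (-1 + 1) ^ p := Sp_eval_add_one _ _
      have : (Sp p).eval (-1) = 0 := by
        rw [show (-1 : ℚ) + 1 = 0 by ring, zero_pow (by omega : p ≠ 0)] at h1
        linarith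
      push_cast
      rw [show ((1:ℚ)) - 1 = 0 by ring, h0, this]
      ring
    · have ih' := ih hk0
      have hstep : (Sp p).eval (-(k : ℚ)) = (Sp p).eval (-((k : ℚ) + 1)) + (-(k : ℚ)) ^ p := by
        have := Sp_eval_add_one (-((k : ℚ) + 1)) p
        rw [show -((k : ℚ) + 1) + 1 = -(k : ℚ) by ring] at this
        linarith
      have hfwd : (Sp p).eval ((k : ℚ)) = (Sp p).eval ((k : ℚ) - 1) + (k : ℚ) ^ p := by
        have := Sp_eval_add_one ((k : ℚ) - 1) p
        rw [show ((k : ℚ) - 1) + 1 = (k : ℚ) by ring] at this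
        linarith
    -- eval (-(k+1)) = eval (-k) - (-k)^p = (-1)^(p+1) (eval (k-1) + k^p) = (-1)^(p+1) eval k
      have hnk : (-(k : ℚ)) ^ p = (-1) ^ p * (k : ℚ) ^ p := by
        rw [neg_pow]
      push_cast
      rw [show -((k : ℚ) + 1) = -((k:ℚ)+1) from rfl]
      have : (Sp p).eval (-((k : ℚ) + 1)) = (Sp p).eval (-(k : ℚ)) - (-(k : ℚ)) ^ p := by
        linarith
      rw [this, ih', hnk, show ((k : ℚ) + 1) - 1 = (k : ℚ) by ring, hfwd, pow_succ]
      ring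

noncomputable def Mm (m : ℕ) : Matrix (Fin m) (Fin m) ℚ[X] :=
  Matrix.of fun i j => Sp ((i : ℕ) + (j : ℕ))

noncomputable def Pm (m : ℕ) : ℚ[X] := (Mm m).det

lemma Mm_map_eval (m t : ℕ) :
    (Mm m).map (eval (t : ℚ)) = (designMatQ t m)ᵀ * designMatQ t m := by
  ext i j
  simp only [Mm, map_apply, of_apply, mul_apply, transpose_apply, designMatQ, of_apply]
  rw [Sp_eval]
  rw [Fin.sum_univ_eq_sum_range (fun s => ((s:ℚ)+1)^(i:ℕ) * ((s:ℚ)+1)^(j:ℕ))]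
  exact Finset.sum_congr rfl fun n _ => by rw [← pow_add]

lemma Pm_eval (m t : ℕ) :
    (Pm m).eval (t : ℚ) = ((designMatQ t m)ᵀ * designMatQ t m).det := by
  rw [Pm, ← Mm_map_eval m t, ← Polynomial.coe_evalRingHom]
  exact RingHom.map_det (evalRingHom (t : ℚ)) (Mm m)

set_option maxHeartbeats 1000000 in
lemma Pm_natDegree (m : ℕ) : (Pm m).natDegree ≤ m * m := by
  rw [Pm, Matrix.det_apply]
  refine (natDegree_sum_le _ _).trans ?_
  rw [Finset.fold_max_le]
  refine ⟨Nat.zero_le _, fun σ _ => ?_⟩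
  have hsgn : ((Equiv.Perm.sign σ : ℤˣ) • ∏ i : Fin m, Mm m (σ i) i).natDegree
      = (∏ i : Fin m, Mm m (σ i) i).natDegree := by
    rcases Int.units_eq_one_or (Equiv.Perm.sign σ) with h | h <;> rw [h] <;> simp
  simp only [Function.comp_apply]
  rw [hsgn]
  refine (natDegree_prod_le _ _).trans ?_
  have h1 : ∀ i : Fin m, (Mm m (σ i) i).natDegree ≤ (σ i : ℕ) + (i : ℕ) + 1 := fun i =>
    Sp_natDegree _
  calc ∑ i : Fin m, (Mm m (σ i) i).natDegree
      ≤ ∑ i : Fin m, ((σ i : ℕ) + (i : ℕ) + 1) := Finset.sum_le_sum fun i _ => h1 i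
    _ = (∑ i : Fin m, (σ i : ℕ)) + (∑ i : Fin m, (i : ℕ)) + m := by
        rw [Finset.sum_add_distrib, Finset.sum_add_distrib]; simp [Finset.card_univ]
    _ = (∑ i : Fin m, (i : ℕ)) + (∑ i : Fin m, (i : ℕ)) + m := by
        rw [Equiv.sum_comp σ (fun i : Fin m => (i : ℕ))]
    _ ≤ m * m := by
        have h2 : (∑ i : Fin m, (i : ℕ)) = ∑ i ∈ range m, i := Fin.sum_univ_eq_sum_range (fun i => i) m
        have h3 : (∑ i ∈ range m, i) * 2 = m * (m - 1) := Finset.sum_range_id_mul_two m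
        have h4 : m * (m - 1) + m = m * m := by
          cases m with
          | zero => rfl
          | succ n => simp [Nat.succ_sub_one]; ring
        omega

lemma det_dvd_of_ker {m : ℕ} (M : Matrix (Fin m) (Fin m) ℚ[X]) (a : ℚ) (d : ℕ)
    (K : Submodule ℚ (Fin m → ℚ))
    (hK : ∀ v ∈ K, (M.map (eval a)).mulVec v = 0)
    (hd : d ≤ Module.finrank ℚ K) :
    (X - C a) ^ d ∣ M.det := by
  classical
  obtain ⟨L, hL⟩ := Submodule.exists_isCompl K
  let bK := Module.finBasis ℚ K
  let bL := Module.finBasis ℚ L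
  have hdim : finrank ℚ K + finrank ℚ L = m := by
    rw [Submodule.finrank_add_eq_of_isCompl hL, Module.finrank_pi, Fintype.card_fin]
  let e : (Fin (finrank ℚ K) ⊕ Fin (finrank ℚ L)) ≃ Fin m :=
    finSumFinEquiv.trans (finCongr hdim)
  let b : Basis (Fin m) ℚ (Fin m → ℚ) :=
    ((bK.prod bL).map (Submodule.prodEquivOfIsCompl K L hL)).reindex e
  have hbK : ∀ s : Fin (finrank ℚ K), b (e (Sum.inl s)) ∈ K := by
    intro s
    simp only [b, Basis.reindex_apply, Equiv.symm_apply_apply, Basis.map_apply,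
      Basis.prod_apply, Sum.elim_inl, Function.comp_apply, LinearMap.inl_apply,
      Submodule.coe_prodEquivOfIsCompl']
    simp
  set N : Matrix (Fin m) (Fin m) ℚ := (Pi.basisFun ℚ (Fin m)).toMatrix ⇑b with hN
  have hNentry : ∀ k j, N k j = b j k := by
    intro k j
    simp [hN, Basis.toMatrix_apply]
  have hNunit : IsUnit N.det := by
    have : Invertible N := (Pi.basisFun ℚ (Fin m)).invertibleToMatrix b
    exact N.isUnit_det_of_invertible
  set S : Finset (Fin m) := univ.filter (fun j => b j ∈ K) with hS
  have hcardS : d ≤ S.card := by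
    have himg : (univ.image (fun s : Fin (finrank ℚ K) => e (Sum.inl s))) ⊆ S := by
      intro j hj
      obtain ⟨s, _, rfl⟩ := Finset.mem_image.mp hj
      exact Finset.mem_filter.mpr ⟨Finset.mem_univ _, hbK s⟩
    have hinj : Function.Injective (fun s : Fin (finrank ℚ K) => e (Sum.inl s)) :=
      fun s t h => Sum.inl_injective (e.injective h)
    calc d ≤ finrank ℚ K := hd
      _ = (univ.image (fun s : Fin (finrank ℚ K) => e (Sum.inl s))).card := by
          rw [Finset.card_image_of_injective _ hinj, Finset.card_univ, Fintype.card_fin]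
      _ ≤ S.card := Finset.card_le_card himg
  -- columns indexed by S vanish at a
  have hcol : ∀ j ∈ S, ∀ i, IsRoot ((M * N.map C) i j) a := by
    intro j hj i
    have hbj : b j ∈ K := (Finset.mem_filter.mp hj).2
    have h0 := congrFun (hK (b j) hbj) i
    simp only [IsRoot, Matrix.mul_apply, eval_finset_sum, eval_mul, Matrix.map_apply, eval_C]
    simp only [Matrix.mulVec, dotProduct, Matrix.map_apply, Pi.zero_apply] at h0
    rw [← h0]
    exact Finset.sum_congr rfl fun k _ => by rw [hNentry]
  set B : Matrix (Fin m) (Fin m) ℚ[X] := Matrix.of fun i j =>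
    if j ∈ S then ((M * N.map C) i j) /ₘ (X - C a) else (M * N.map C) i j with hB
  have hfact : (M * N.map C) = Matrix.of fun i j =>
      (if j ∈ S then X - C a else 1) * B i j := by
    refine Matrix.ext fun i j => ?_
    simp only [Matrix.of_apply, hB]
    by_cases h : j ∈ S
    · simp only [h, if_true]
      exact (mul_divByMonic_eq_iff_isRoot.mpr (hcol j h i)).symm
    · simp [h]
  have hdet : M.det * C N.det = (X - C a) ^ S.card * B.det := by
    have h1 : (M * N.map C).det = M.det * (N.map C).det := Matrix.det_mul _ _
    have h2 : (N.map C).det = C N.det := (RingHom.map_det (C : ℚ →+* ℚ[X]) N).symm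
    have h3 : (M * N.map C).det = (∏ j, (if j ∈ S then X - C a else 1)) * B.det := by
      rw [hfact]; exact Matrix.det_mul_row _ _
    have h4 : (∏ j, (if j ∈ S then (X - C a : ℚ[X]) else 1)) = (X - C a) ^ S.card := by
      rw [Finset.prod_ite, Finset.prod_const, Finset.prod_const_one, mul_one,
        Finset.filter_univ_mem]
    rw [← h2, ← h1, h3, h4]
  have hdvd : (X - C a) ^ d ∣ M.det * C N.det := by
    rw [hdet]
    exact Dvd.dvd.mul_right (pow_dvd_pow _ hcardS) _
  have hCunit : IsUnit (C N.det) := hNunit.map (C : ℚ →+* ℚ[X])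
  exact (hCunit.dvd_mul_right).mp hdvd

lemma finrank_ker_ge {k m : ℕ} (W : Matrix (Fin k) (Fin m) ℚ) :
    m - k ≤ finrank ℚ (LinearMap.ker W.mulVecLin) := by
  have h1 := LinearMap.finrank_range_add_finrank_ker W.mulVecLin
  have h2 : finrank ℚ (Fin m → ℚ) = m := by rw [Module.finrank_pi, Fintype.card_fin]
  have h3 : finrank ℚ (LinearMap.range W.mulVecLin) ≤ k := by
    have := Submodule.finrank_le (LinearMap.range W.mulVecLin)
    rwa [Module.finrank_pi, Fintype.card_fin] at this
  omega

lemma dvd_pos_root (m k : ℕ) (hk : k ≤ m) : (X - C (k : ℚ)) ^ (m - k) ∣ Pm m := by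
  refine det_dvd_of_ker (Mm m) (k : ℚ) (m - k)
    (LinearMap.ker (designMatQ k m).mulVecLin) ?_ (finrank_ker_ge _)
  intro v hv
  rw [Mm_map_eval, ← Matrix.mulVec_mulVec]
  have hv0 : (designMatQ k m).mulVec v = 0 := hv
  rw [hv0, Matrix.mulVec_zero]

lemma dvd_neg_root (m k : ℕ) (hk1 : 1 ≤ k) (hk : k ≤ m) :
    (X - C (-(k : ℚ))) ^ (m - k) ∣ Pm m := by
  classical
  obtain ⟨q, rfl⟩ : ∃ q, k = q + 1 := ⟨k - 1, by omega⟩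
  set W : Matrix (Fin (q + 1)) (Fin m) ℚ := Matrix.of fun s i =>
    (-1 : ℚ) ^ (i : ℕ) *
      (if (s : ℕ) < q then ((s : ℕ) + 1 : ℚ) ^ (i : ℕ)
       else if (i : ℕ) = 0 then 1 else 0) with hW
  have hA : (Mm m).map (eval (-((q + 1 : ℕ) : ℚ))) = -(Wᵀ * W) := by
    ext i j
    have hsum : ∀ s : Fin (q + 1), W s i * W s j
        = (-1 : ℚ) ^ ((i : ℕ) + (j : ℕ)) *
          (if (s : ℕ) < q then ((s : ℕ) + 1 : ℚ) ^ ((i : ℕ) + (j : ℕ))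
           else if (i : ℕ) = 0 ∧ (j : ℕ) = 0 then 1 else 0) := by
      intro s
      simp only [hW, Matrix.of_apply]
      by_cases h : (s : ℕ) < q
      · simp only [h, if_true]; rw [pow_add, pow_add]; ring
      · simp only [h, if_false]
        by_cases hi : (i : ℕ) = 0 <;> by_cases hj : (j : ℕ) = 0 <;>
          simp [hi, hj, pow_add] <;> ring
    have hWW : (Wᵀ * W) i j
        = (-1 : ℚ) ^ ((i : ℕ) + (j : ℕ)) *
          ((∑ n ∈ range q, ((n : ℚ) + 1) ^ ((i : ℕ) + (j : ℕ)))
            + if (i : ℕ) = 0 ∧ (j : ℕ) = 0 then 1 else 0) := by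
      simp only [Matrix.mul_apply, Matrix.transpose_apply]
      rw [Finset.sum_congr rfl fun s _ => hsum s, ← Finset.mul_sum]
      congr 1
      rw [Fin.sum_univ_eq_sum_range (fun n =>
        if n < q then ((n : ℚ) + 1) ^ ((i : ℕ) + (j : ℕ))
        else if (i : ℕ) = 0 ∧ (j : ℕ) = 0 then 1 else 0) (q + 1)]
      rw [Finset.sum_range_succ, if_neg (lt_irrefl q)]
      congr 1
      refine Finset.sum_congr rfl fun n hn => ?_
      rw [if_pos (Finset.mem_range.mp hn)]
    simp only [Matrix.map_apply, Matrix.neg_apply, hWW, Mm, Matrix.of_apply]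
    rcases Nat.eq_zero_or_pos ((i : ℕ) + (j : ℕ)) with hij | hij
    · have hi : (i : ℕ) = 0 := by omega
      have hj : (j : ℕ) = 0 := by omega
      rw [hij, Sp_zero, eval_X]
      simp only [hi, hj, pow_zero, true_and, if_true, pow_zero, one_mul]
      simp only [Finset.sum_const, Finset.card_range, nsmul_eq_mul, mul_one]
      push_cast
      ring
    · rw [Sp_eval_neg _ hij _ (by omega : 1 ≤ q + 1)]
      have hc : (((q + 1 : ℕ) : ℚ) - 1) = ((q : ℕ) : ℚ) := by push_cast; ring
      rw [hc, Sp_eval]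
      have hne : ¬ ((i : ℕ) = 0 ∧ (j : ℕ) = 0) := by omega
      rw [if_neg hne, add_zero, pow_succ]
      ring
  refine det_dvd_of_ker (Mm m) (-((q + 1 : ℕ) : ℚ)) (m - (q + 1))
    (LinearMap.ker W.mulVecLin) ?_ (finrank_ker_ge _)
  intro v hv
  have hv0 : W.mulVec v = 0 := hv
  rw [hA, Matrix.neg_mulVec, ← Matrix.mulVec_mulVec, hv0, Matrix.mulVec_zero, neg_zero]

/-- the factor polynomials -/
noncomputable def fp (m k : ℕ) : ℚ[X] :=
  if k = 0 then X ^ m else ((X - C (k : ℚ)) * (X + C (k : ℚ))) ^ (m - k)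

lemma coprime_lin {a b : ℚ} (h : a ≠ b) : IsCoprime (X - C a) (X - C b) :=
  isCoprime_X_sub_C_of_isUnit_sub (isUnit_iff_ne_zero.mpr (sub_ne_zero.mpr h))

lemma X_add_C_eq (a : ℚ) : X + C a = X - C (-a) := by rw [map_neg, sub_neg_eq_add]

lemma fp_coprime (m : ℕ) {k l : ℕ} (hkl : k ≠ l) : IsCoprime (fp m k) (fp m l) := by
  have key : ∀ k l : ℕ, 1 ≤ l → k ≠ l →
      IsCoprime ((X - C (k : ℚ))) ((X - C (l : ℚ)) * (X + C (l : ℚ))) := by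
    intro k l hl hne
    refine (coprime_lin ?_).mul_right ?_
    · exact_mod_cast fun h => hne (Nat.cast_injective h)
    · rw [X_add_C_eq]
      refine coprime_lin ?_
      have h1 : (0:ℚ) ≤ (k:ℚ) := Nat.cast_nonneg k
      have h2 : (1:ℚ) ≤ (l:ℚ) := by exact_mod_cast hl
      intro h; linarith
  have key2 : ∀ k l : ℕ, 1 ≤ k → 1 ≤ l → k ≠ l →
      IsCoprime ((X - C (k : ℚ)) * (X + C (k : ℚ))) ((X - C (l : ℚ)) * (X + C (l : ℚ))) := by
    intro k l hk hl hne
    refine IsCoprime.mul_left (key k l hl hne) ?_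
    rw [X_add_C_eq (k : ℚ)]
    refine (coprime_lin ?_).mul_right ?_
    · have : (1:ℚ) ≤ (k:ℚ) := by exact_mod_cast hk
      have : (1:ℚ) ≤ (l:ℚ) := by exact_mod_cast hl
      intro h; linarith
    · rw [X_add_C_eq]
      refine coprime_lin ?_
      have : (1:ℚ) ≤ (k:ℚ) := by exact_mod_cast hk
      have : (1:ℚ) ≤ (l:ℚ) := by exact_mod_cast hl
      intro h
      have : (k:ℚ) = (l:ℚ) := by linarith [neg_injective h]
      exact hne (by exact_mod_cast this)
  unfold fp
  rcases Nat.eq_zero_or_pos k with hk | hk <;> rcases Nat.eq_zero_or_pos l with hl | hl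
  · omega
  · subst hk
    rw [if_pos rfl, if_neg (by omega)]
    refine IsCoprime.pow ?_
    have := key 0 l hl (by omega)
    simpa using this
  · subst hl
    rw [if_pos rfl, if_neg (by omega)]
    refine (IsCoprime.pow ?_).symm
    have := key 0 k hk (by omega)
    simpa using this
  · rw [if_neg (by omega), if_neg (by omega)]
    exact IsCoprime.pow (key2 k l hk hl hkl)

lemma fp_dvd (m : ℕ) (hm : 1 ≤ m) {k : ℕ} (hk : k < m) : fp m k ∣ Pm m := by
  unfold fp
  rcases Nat.eq_zero_or_pos k with h0 | h0
  · subst h0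
    rw [if_pos rfl]
    have := dvd_pos_root m 0 (by omega)
    simpa using this
  · rw [if_neg (by omega), mul_pow]
    refine IsCoprime.mul_dvd ?_ (dvd_pos_root m k (by omega)) ?_
    · refine IsCoprime.pow ?_
      rw [X_add_C_eq]
      refine coprime_lin ?_
      have : (1:ℚ) ≤ (k:ℚ) := by exact_mod_cast h0
      intro h; linarith
    · rw [X_add_C_eq]
      exact dvd_neg_root m k h0 (by omega)

noncomputable def Rm (m : ℕ) : ℚ[X] := ∏ k ∈ range m, fp m k

lemma Rm_dvd (m : ℕ) (hm : 1 ≤ m) : Rm m ∣ Pm m := by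
  refine Finset.prod_dvd_of_coprime ?_ ?_
  · intro k _ l _ hkl
    exact fp_coprime m hkl
  · intro k hk
    exact fp_dvd m hm (by simpa using hk)

lemma fp_monic (m k : ℕ) : (fp m k).Monic := by
  unfold fp
  split
  · exact monic_X_pow m
  · exact ((monic_X_sub_C _).mul (monic_X_add_C _)).pow _

lemma Rm_monic (m : ℕ) : (Rm m).Monic := monic_prod_of_monic _ _ fun k _ => fp_monic m k

lemma fp_natDegree (m k : ℕ) : (fp m k).natDegree = if k = 0 then m else 2 * (m - k) := by
  unfold fp
  split
  · simp
  · rw [Monic.natDegree_pow]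
    · rw [Monic.natDegree_mul (monic_X_sub_C _) (monic_X_add_C _), natDegree_X_sub_C,
        natDegree_X_add_C]
      ring
    · exact (monic_X_sub_C _).mul (monic_X_add_C _)

lemma Rm_natDegree (m : ℕ) (hm : 1 ≤ m) : (Rm m).natDegree = m * m := by
  rw [Rm, natDegree_prod_of_monic _ _ fun k _ => fp_monic m k]
  obtain ⟨n, rfl⟩ : ∃ n, m = n + 1 := ⟨m - 1, by omega⟩
  rw [Finset.sum_range_succ']
  simp only [fp_natDegree, if_true]
  have h1 : ∀ j ∈ range n, (if j + 1 = 0 then n + 1 else 2 * (n + 1 - (j + 1)))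
      = 2 * (n - j) := by
    intro j hj
    rw [if_neg (by omega)]
    congr 1
    omega
  rw [Finset.sum_congr rfl h1]
  have h2 : ∑ j ∈ range n, 2 * (n - j) = 2 * ∑ j ∈ range n, (n - j) := by
    rw [Finset.mul_sum]
  have h3 : ∑ j ∈ range n, (n - j) = (∑ j ∈ range n, j) + n := by
    have := Finset.sum_range_reflect (fun j => j + 1) n
    calc ∑ j ∈ range n, (n - j) = ∑ j ∈ range n, (n - 1 - j + 1) := by
          refine Finset.sum_congr rfl fun j hj => ?_
          have := Finset.mem_range.mp hj
          omega
      _ = ∑ j ∈ range n, (j + 1) := this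
      _ = (∑ j ∈ range n, j) + n := by rw [Finset.sum_add_distrib, Finset.sum_const,
            Finset.card_range, smul_eq_mul, mul_one]
  have h4 : (∑ j ∈ range n, j) * 2 = n * (n - 1) := Finset.sum_range_id_mul_two n
  have h5 : n * (n - 1) + 2 * n = n * n + n := by
    cases n with
    | zero => rfl
    | succ s => simp [Nat.succ_sub_one]; ring
  have : (n+1) * (n+1) = n * n + n + (n + 1) := by ring
  omega

lemma Rm_eval (m : ℕ) (hm : 1 ≤ m) (t : ℚ) :
    (Rm m).eval t = t ^ m *
      ∏ i ∈ Finset.Icc 2 m, (t ^ 2 - ((i : ℚ) - 1) ^ 2) ^ (m - i + 1) := by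
  rw [Rm, eval_prod]
  have hsplit : range m = insert 0 (Finset.Icc 1 (m - 1)) := by
    ext x
    simp only [Finset.mem_range, Finset.mem_insert, Finset.mem_Icc]
    omega
  rw [hsplit, Finset.prod_insert (by simp)]
  have h0 : eval t (fp m 0) = t ^ m := by simp [fp]
  rw [h0]
  congr 1
  have himg : Finset.Icc 2 m = (Finset.Icc 1 (m - 1)).image (· + 1) := by
    ext x
    simp only [Finset.mem_Icc, Finset.mem_image]
    constructor
    · intro ⟨h2, hx⟩; exact ⟨x - 1, by omega, by omega⟩
    · rintro ⟨y, hy, rfl⟩; omega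
  rw [himg, Finset.prod_image (fun a _ b _ h => by omega)]
  refine Finset.prod_congr rfl fun k hk => ?_
  have hk' := Finset.mem_Icc.mp hk
  have h1 : eval t (fp m k) = (t ^ 2 - (k : ℚ) ^ 2) ^ (m - k) := by
    rw [fp, if_neg (by omega)]
    simp only [eval_pow, eval_mul, eval_sub, eval_add, eval_X, eval_C]
    congr 1
    ring
  rw [h1]
  have h2 : ((k : ℚ) + 1) - 1 = (k : ℚ) := by ring
  have h3 : m - (k + 1) + 1 = m - k := by omega
  rw [Nat.cast_add, Nat.cast_one, h2, h3]


/-- There is a positive rational constant `c_m`, depending only on `m`,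
with `det(X_tᵀ X_t) = c_m · t^m · ∏_{i=2}^m (t² − (i−1)²)^{m−i+1}` for every `t`. -/
theorem stmt13 (m : ℕ) (hm : 1 ≤ m) :
    ∃ c : ℚ, 0 < c ∧ ∀ t : ℕ,
      ((designMatQ t m)ᵀ * designMatQ t m).det =
        c * (t : ℚ) ^ m *
          ∏ i ∈ Finset.Icc 2 m, ((t : ℚ) ^ 2 - ((i : ℚ) - 1) ^ 2) ^ (m - i + 1) := by
  obtain ⟨qp, hq⟩ := Rm_dvd m hm
  have hvand : (designMatQ m m).det ≠ 0 := by
    have : designMatQ m m = Matrix.vandermonde (fun j : Fin m => ((j : ℕ) : ℚ) + 1) := by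
      ext i j; simp [designMatQ, Matrix.vandermonde]
    rw [this, Matrix.det_vandermonde]
    refine Finset.prod_ne_zero_iff.mpr fun i _ => Finset.prod_ne_zero_iff.mpr fun j hj => ?_
    have hlt : i < j := Finset.mem_Ioi.mp hj
    have hij : (i : ℕ) < (j : ℕ) := hlt
    have : ((i : ℕ) : ℚ) < ((j : ℕ) : ℚ) := by exact_mod_cast hij
    intro h0
    have : ((j : ℕ) : ℚ) + 1 = ((i : ℕ) : ℚ) + 1 := by linarith [sub_eq_zero.mp h0]
    linarith
  have hPm_eval_m : (Pm m).eval (m : ℚ) = (designMatQ m m).det ^ 2 := by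
    rw [Pm_eval, Matrix.det_mul, Matrix.det_transpose, sq]
  have hPpos : 0 < (Pm m).eval (m : ℚ) := by
    rw [hPm_eval_m]; positivity
  have hPne : Pm m ≠ 0 := fun h => by rw [h, eval_zero] at hPpos; exact lt_irrefl 0 hPpos
  have hqne : qp ≠ 0 := fun h => hPne (by rw [hq, h, mul_zero])
  have hdeg : qp.natDegree = 0 := by
    have h1 : (Pm m).natDegree = (Rm m).natDegree + qp.natDegree := by
      rw [hq]; exact (Rm_monic m).natDegree_mul' hqne
    have h2 := Pm_natDegree m
    rw [Rm_natDegree m hm] at h1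
    omega
  obtain ⟨c, hc⟩ := Polynomial.natDegree_eq_zero.mp hdeg
  have hcne : c ≠ 0 := fun h => hqne (by rw [← hc, h, map_zero])
  have hkey : ∀ t : ℕ, ((designMatQ t m)ᵀ * designMatQ t m).det
      = c * ((t : ℚ) ^ m *
          ∏ i ∈ Finset.Icc 2 m, ((t : ℚ) ^ 2 - ((i : ℚ) - 1) ^ 2) ^ (m - i + 1)) := by
    intro t
    rw [← Pm_eval, hq, eval_mul, ← hc, eval_C, Rm_eval m hm, mul_comm]
  have hRpos : 0 < (Rm m).eval (m : ℚ) := by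
    rw [Rm_eval m hm]
    refine mul_pos (by positivity) (Finset.prod_pos fun i hi => ?_)
    have hi' := Finset.mem_Icc.mp hi
    have h1 : (1 : ℚ) ≤ (i : ℚ) - 1 := by
      have : (2:ℚ) ≤ (i : ℚ) := by exact_mod_cast hi'.1
      linarith
    have h2 : (i : ℚ) - 1 < (m : ℚ) := by
      have : (i : ℚ) ≤ (m : ℚ) := by exact_mod_cast hi'.2
      linarith
    have h3 : ((i : ℚ) - 1) ^ 2 < (m : ℚ) ^ 2 := by nlinarith
    have h4 : (0:ℚ) < (m : ℚ) ^ 2 - ((i : ℚ) - 1) ^ 2 := by linarith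
    positivity
  have hcpos : 0 < c := by
    have heq : (Pm m).eval (m : ℚ) = (Rm m).eval (m : ℚ) * c := by
      rw [hq, eval_mul, ← hc, eval_C]
    rcases lt_trichotomy c 0 with h | h | h
    · nlinarith
    · exact absurd h hcne
    · exact h
  exact ⟨c, hcpos, fun t => by rw [hkey t]; ring⟩
end

section
/- Fix an integer m ≥ 1. There exists a constant C > 0 depending only on m such that for every integer t ≥ m, the matrix X_tᵀ X_t is invertible and every entry of its inverse satisfies | ((X_tᵀ X_t)^{-1})_{ij} | ≤ C · t^{1 − i − j} for all 1 ≤ i, j ≤ m, where X_t is the t × m matrix whose j-th row (j = 1,…,t) is (1, j, j², …, j^{m−1}). -/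
open Matrix

lemma abs_det_le_prod {m : ℕ} (M W : Matrix (Fin m) (Fin m) ℝ)
    (h : ∀ p q, |M p q| ≤ W p q) :
    |M.det| ≤ ∑ σ : Equiv.Perm (Fin m), ∏ q, W (σ q) q := by
  rw [Matrix.det_apply]
  refine (Finset.abs_sum_le_sum_abs _ _).trans (Finset.sum_le_sum fun σ _ => ?_)
  have h1 : |Equiv.Perm.sign σ • ∏ i, M (σ i) i| = |∏ i, M (σ i) i| := by
    rcases Int.units_eq_one_or (Equiv.Perm.sign σ) with hs | hs <;> simp [hs]
  rw [h1, Finset.abs_prod]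
  exact Finset.prod_le_prod (fun i _ => abs_nonneg _) (fun i _ => h _ _)

lemma abs_det_le_const {m : ℕ} (M : Matrix (Fin m) (Fin m) ℝ) (B : ℝ)
    (h : ∀ p q, |M p q| ≤ B) : |M.det| ≤ (Nat.factorial m : ℝ) * B ^ m := by
  have := abs_det_le_prod M (fun _ _ => B) h
  simpa [Finset.prod_const, Finset.card_univ, Fintype.card_perm] using this

/-- constant for the nodes lemma -/
noncomputable def Knode (m : ℕ) : ℝ := (Nat.factorial m : ℝ) * (2*m) ^ (m^2)

noncomputable def cnode (m : ℕ) : ℝ := ((m:ℝ)^2 * (Knode m)^2)⁻¹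

lemma Knode_pos {m : ℕ} (hm : 1 ≤ m) : 0 < Knode m := by
  have : (0:ℝ) < (2*m) := by positivity
  unfold Knode
  positivity

lemma cnode_pos {m : ℕ} (hm : 1 ≤ m) : 0 < cnode m := by
  have h1 : (0:ℝ) < m := by exact_mod_cast hm
  have := Knode_pos hm
  unfold cnode; positivity

lemma nodes_quadform {m : ℕ} (hm : 1 ≤ m) (x : Fin m → ℝ)
    (hx1 : ∀ p, |x p| ≤ 1)
    (hgap : ∀ p q : Fin m, p < q → 1/(2*(m:ℝ)) ≤ x q - x p) (u : Fin m → ℝ) :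
    cnode m * ∑ i, u i ^ 2 ≤ ∑ p, (∑ i : Fin m, x p ^ (i:ℕ) * u i) ^ 2 := by
  have hm0 : (0:ℝ) < m := by exact_mod_cast hm
  have hb0 : (0:ℝ) < 1/(2*m) := by positivity
  have hb1 : 1/(2*(m:ℝ)) ≤ 1 := by
    rw [div_le_one (by positivity)]
    have hm1 : (1:ℝ) ≤ m := by exact_mod_cast hm
    linarith
  set V := Matrix.vandermonde x with hV
  -- determinant lower bound
  have hdet : (1/(2*(m:ℝ)))^(m^2) ≤ V.det := by
    rw [hV, Matrix.det_vandermonde]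
    calc (1/(2*(m:ℝ)))^(m^2) ≤ (1/(2*(m:ℝ)))^(∑ i : Fin m, (Finset.Ioi i).card) := by
          apply pow_le_pow_of_le_one hb0.le hb1
          calc (∑ i : Fin m, (Finset.Ioi i).card) ≤ ∑ i : Fin m, m := by
                refine Finset.sum_le_sum fun i _ => ?_
                simpa using (Finset.card_le_univ (Finset.Ioi i))
            _ = m^2 := by simp [sq]
      _ = ∏ i : Fin m, ∏ j ∈ Finset.Ioi i, (1/(2*(m:ℝ))) := by
          simp only [Finset.prod_const]
          rw [Finset.prod_pow_eq_pow_sum]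
      _ ≤ ∏ i : Fin m, ∏ j ∈ Finset.Ioi i, (x j - x i) := by
          apply Finset.prod_le_prod
          · intro i _; positivity
          · intro i _
            apply Finset.prod_le_prod (fun j _ => hb0.le)
            intro j hj
            exact hgap i j (Finset.mem_Ioi.mp hj)
  have hd0 : 0 < V.det := lt_of_lt_of_le (by positivity) hdet
  have hunit : IsUnit V.det := isUnit_iff_ne_zero.mpr hd0.ne'
  have hadj : ∀ i j, |V.adjugate i j| ≤ (Nat.factorial m : ℝ) := by
    intro i j
    rw [Matrix.adjugate_apply]
    have := abs_det_le_const (V.updateRow j (Pi.single i 1)) 1 ?_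
    · simpa using this
    · intro p q
      by_cases hp : p = j
      · subst hp
        rw [Matrix.updateRow_self]
        by_cases hq : q = i
        · subst hq; simp
        · simp [Pi.single_apply, hq]
      · rw [Matrix.updateRow_ne hp]
        have : |x p ^ (q:ℕ)| ≤ 1 := by
          rw [abs_pow]; exact pow_le_one₀ (abs_nonneg _) (hx1 p)
        simpa [hV, Matrix.vandermonde] using this
  have hVinv : ∀ i j, |V⁻¹ i j| ≤ Knode m := by
    intro i j
    rw [Matrix.inv_def, Ring.inverse_eq_inv']
    have h1 : |(V.det⁻¹ • V.adjugate) i j| = |V.det|⁻¹ * |V.adjugate i j| := by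
      simp [Matrix.smul_apply, abs_mul, abs_inv]
    rw [h1, abs_of_pos hd0]
    have h2 : V.det⁻¹ ≤ ((1/(2*(m:ℝ)))^(m^2))⁻¹ := by
      exact inv_anti₀ (by positivity) hdet
    have h3 : ((1/(2*(m:ℝ)))^(m^2))⁻¹ = (2*(m:ℝ))^(m^2) := by
      rw [one_div, ← inv_pow, inv_inv]
    calc V.det⁻¹ * |V.adjugate i j| ≤ ((2*(m:ℝ))^(m^2)) * (Nat.factorial m : ℝ) := by
          apply mul_le_mul (h3 ▸ h2) (hadj i j) (abs_nonneg _) (by positivity)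
      _ = Knode m := by rw [Knode]; ring
  have hu : ∀ i, u i = ∑ p, V⁻¹ i p * (V *ᵥ u) p := by
    intro i
    have : V⁻¹ *ᵥ (V *ᵥ u) = u := by
      rw [Matrix.mulVec_mulVec, Matrix.nonsing_inv_mul V hunit, Matrix.one_mulVec]
    conv_lhs => rw [← this]
    rfl
  have key : ∀ i, u i ^ 2 ≤ (Knode m)^2 * ((m:ℝ) * ∑ p, ((V *ᵥ u) p)^2) := by
    intro i
    have h1 : |u i| ≤ Knode m * ∑ p, |(V *ᵥ u) p| := by
      rw [hu i]
      refine (Finset.abs_sum_le_sum_abs _ _).trans ?_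
      rw [Finset.mul_sum]
      refine Finset.sum_le_sum fun p _ => ?_
      rw [abs_mul]
      exact mul_le_mul_of_nonneg_right (hVinv i p) (abs_nonneg _)
    have h2 : (∑ p, |(V *ᵥ u) p|)^2 ≤ (m:ℝ) * ∑ p, ((V *ᵥ u) p)^2 := by
      have := Finset.sum_mul_sq_le_sq_mul_sq Finset.univ (fun _ : Fin m => (1:ℝ))
        (fun p => |(V *ᵥ u) p|)
      simpa [sq_abs] using this
    calc u i ^2 = |u i|^2 := by rw [sq_abs]
      _ ≤ (Knode m * ∑ p, |(V *ᵥ u) p|)^2 := by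
          apply pow_le_pow_left₀ (abs_nonneg _) h1
      _ = (Knode m)^2 * (∑ p, |(V *ᵥ u) p|)^2 := by ring
      _ ≤ (Knode m)^2 * ((m:ℝ) * ∑ p, ((V *ᵥ u) p)^2) := by
          apply mul_le_mul_of_nonneg_left h2 (by positivity)
  have hsum : ∑ i, u i ^ 2 ≤ (m:ℝ)^2 * (Knode m)^2 * ∑ p, ((V *ᵥ u) p)^2 := by
    calc ∑ i, u i ^2 ≤ ∑ _i : Fin m, (Knode m)^2 * ((m:ℝ) * ∑ p, ((V *ᵥ u) p)^2) :=
          Finset.sum_le_sum fun i _ => key i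
      _ = (m:ℝ)^2 * (Knode m)^2 * ∑ p, ((V *ᵥ u) p)^2 := by
          rw [Finset.sum_const]; simp; ring
  have hVu : ∀ p, (V *ᵥ u) p = ∑ i : Fin m, x p ^ (i:ℕ) * u i := by
    intro p; rfl
  have hpos : (0:ℝ) < (m:ℝ)^2 * (Knode m)^2 := by
    have := Knode_pos hm; positivity
  have goalV : cnode m * ∑ i, u i ^2 ≤ ∑ p, ((V *ᵥ u) p)^2 := by
    have h4 : cnode m * ((m:ℝ)^2*(Knode m)^2) = 1 := by
      rw [cnode]; exact inv_mul_cancel₀ hpos.ne'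
    calc cnode m * ∑ i, u i^2 ≤ cnode m * ((m:ℝ)^2 * (Knode m)^2 * ∑ p, ((V *ᵥ u) p)^2) :=
          mul_le_mul_of_nonneg_left hsum (cnode_pos hm).le
      _ = ∑ p, ((V *ᵥ u) p)^2 := by rw [← mul_assoc, h4, one_mul]
  simpa only [hVu] using goalV

lemma grid_quadform {m : ℕ} (hm : 1 ≤ m) (t : ℕ) (ht : m ≤ t) (u : Fin m → ℝ) :
    (cnode m / (2*m)) * t * ∑ i, u i ^ 2
      ≤ ∑ k ∈ Finset.range t, (∑ i : Fin m, (((k:ℝ)+1)/t) ^ (i:ℕ) * u i)^2 := by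
  have hm0 : 0 < m := hm
  have ht0 : 0 < t := lt_of_lt_of_le hm0 ht
  have htR : (0:ℝ) < t := by exact_mod_cast ht0
  have hmR : (0:ℝ) < m := by exact_mod_cast hm0
  set s := t / m with hs
  have hs1 : 1 ≤ s := (Nat.one_le_div_iff hm0).mpr ht
  have hms : s * m ≤ t := Nat.div_mul_le_self t m
  have hts : t ≤ 2*(m*s) := by
    have h1 : m * s + t % m = t := by rw [hs]; exact Nat.div_add_mod t m
    have h2 : t % m < m := Nat.mod_lt _ hm0
    have h3 : m ≤ m * s := Nat.le_mul_of_pos_right m hs1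
    omega
  set f : ℕ → ℝ := fun k => (∑ i : Fin m, (((k:ℝ)+1)/t) ^ (i:ℕ) * u i)^2 with hf
  have hf0 : ∀ k, 0 ≤ f k := fun k => sq_nonneg _
  have hmem : ∀ r p : ℕ, r < s → p < m → r + p * s < t := by
    intro r p hr hp
    calc r + p * s < s + p * s := by omega
      _ = (p+1) * s := by ring
      _ ≤ m * s := Nat.mul_le_mul_right s hp
      _ = s * m := Nat.mul_comm m s
      _ ≤ t := hms
  -- per-group bound
  have hgroup : ∀ r, r < s → cnode m * ∑ i, u i ^ 2 ≤ ∑ p ∈ Finset.range m, f (r + p * s) := by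
    intro r hr
    set x : Fin m → ℝ := fun p => (((r + (p:ℕ) * s : ℕ) : ℝ) + 1)/t with hx
    have hx1 : ∀ p, |x p| ≤ 1 := by
      intro p
      have h1 : (0:ℝ) ≤ x p := by
        rw [hx]; positivity
      have h2 : x p ≤ 1 := by
        rw [hx, div_le_one htR]
        have : r + (p:ℕ) * s + 1 ≤ t := hmem r p hr p.isLt
        exact_mod_cast this
      rw [abs_of_nonneg h1]; exact h2
    have hgap : ∀ p q : Fin m, p < q → 1/(2*(m:ℝ)) ≤ x q - x p := by
      intro p q hpq
      have hpq' : (p:ℕ) < (q:ℕ) := hpq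
      have hd : x q - x p = (((q:ℕ) - (p:ℕ) : ℕ) * s : ℕ) / (t:ℝ) := by
        rw [hx]
        push_cast [Nat.cast_sub hpq'.le]
        field_simp
        ring
      rw [hd]
      rw [div_le_div_iff₀ (by positivity) htR]
      have h1 : (1:ℝ) * t ≤ 1 * (2*(m:ℝ)*s) := by
        have : (t:ℝ) ≤ 2*(m*s) := by exact_mod_cast hts
        push_cast at this ⊢
        linarith
      have h2 : (1:ℝ) ≤ ((q:ℕ) - (p:ℕ) : ℕ) := by
        have : 1 ≤ (q:ℕ) - (p:ℕ) := by omega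
        exact_mod_cast this
      have hs0 : (0:ℝ) ≤ s := by positivity
      calc (1:ℝ) * t ≤ 1 * (2*(m:ℝ)*s) := h1
        _ = 2*(m:ℝ)*s := by ring
        _ ≤ (((q:ℕ) - (p:ℕ) : ℕ):ℝ) * s * (2*(m:ℝ)) := by
            nlinarith [h2, hs0, hmR]
        _ = (((q:ℕ) - (p:ℕ) : ℕ) * s : ℕ) * (2*(m:ℝ)) := by push_cast; ring
    have := nodes_quadform hm x hx1 hgap u
    refine this.trans ?_
    rw [Finset.sum_range fun p => f (r + p * s)]
  -- double sum ≤ full sum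
  have hinj : ∀ a ∈ Finset.range s ×ˢ Finset.range m, ∀ b ∈ Finset.range s ×ˢ Finset.range m,
      a.1 + a.2 * s = b.1 + b.2 * s → a = b := by
    intro a ha b hb hab
    rw [Finset.mem_product, Finset.mem_range, Finset.mem_range] at ha hb
    have h1 : (a.1 + a.2 * s) % s = a.1 := by
      rw [Nat.add_mul_mod_self_right, Nat.mod_eq_of_lt ha.1]
    have h2 : (b.1 + b.2 * s) % s = b.1 := by
      rw [Nat.add_mul_mod_self_right, Nat.mod_eq_of_lt hb.1]
    have h3 : (a.1 + a.2 * s) / s = a.2 := by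
      rw [Nat.add_mul_div_right _ _ (by omega : 0 < s), Nat.div_eq_of_lt ha.1, Nat.zero_add]
    have h4 : (b.1 + b.2 * s) / s = b.2 := by
      rw [Nat.add_mul_div_right _ _ (by omega : 0 < s), Nat.div_eq_of_lt hb.1, Nat.zero_add]
    have : a.1 = b.1 := by rw [← h1, ← h2, hab]
    have : a.2 = b.2 := by rw [← h3, ← h4, hab]
    exact Prod.ext ‹a.1 = b.1› ‹a.2 = b.2›
  have hdouble : ∑ rp ∈ Finset.range s ×ˢ Finset.range m, f (rp.1 + rp.2 * s)
      ≤ ∑ k ∈ Finset.range t, f k := by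
    calc ∑ rp ∈ Finset.range s ×ˢ Finset.range m, f (rp.1 + rp.2 * s)
        = ∑ k ∈ (Finset.range s ×ˢ Finset.range m).image (fun rp => rp.1 + rp.2 * s), f k :=
          (Finset.sum_image hinj).symm
      _ ≤ ∑ k ∈ Finset.range t, f k := by
          apply Finset.sum_le_sum_of_subset_of_nonneg
          · intro k hk
            obtain ⟨rp, hrp, rfl⟩ := Finset.mem_image.mp hk
            rw [Finset.mem_product] at hrp
            exact Finset.mem_range.mpr
              (hmem rp.1 rp.2 (Finset.mem_range.mp hrp.1) (Finset.mem_range.mp hrp.2))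
          · intro k _ _; exact hf0 k
  have hLHS : (s:ℝ) * (cnode m * ∑ i, u i ^ 2)
      ≤ ∑ rp ∈ Finset.range s ×ˢ Finset.range m, f (rp.1 + rp.2 * s) := by
    rw [Finset.sum_product]
    calc (s:ℝ) * (cnode m * ∑ i, u i ^ 2)
        = ∑ _r ∈ Finset.range s, (cnode m * ∑ i, u i ^ 2) := by
          rw [Finset.sum_const, Finset.card_range, nsmul_eq_mul]
      _ ≤ ∑ r ∈ Finset.range s, ∑ p ∈ Finset.range m, f (r + p * s) :=
          Finset.sum_le_sum fun r hr => hgroup r (Finset.mem_range.mp hr)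
  have hfinal : (cnode m / (2*m)) * t * ∑ i, u i ^ 2 ≤ (s:ℝ) * (cnode m * ∑ i, u i ^ 2) := by
    have hcn := cnode_pos hm
    have hsum0 : (0:ℝ) ≤ ∑ i, u i ^ 2 := Finset.sum_nonneg fun i _ => sq_nonneg _
    have htsR : (t:ℝ) ≤ 2*m*s := by
      have : (t:ℝ) ≤ 2*(m*s) := by exact_mod_cast hts
      linarith
    have : (cnode m / (2*m)) * t ≤ (s:ℝ) * cnode m := by
      rw [div_mul_eq_mul_div, div_le_iff₀ (by positivity)]
      calc cnode m * t ≤ cnode m * (2*m*s) := by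
            apply mul_le_mul_of_nonneg_left htsR hcn.le
        _ = (s:ℝ) * cnode m * (2*m) := by ring
    calc (cnode m / (2*m)) * t * ∑ i, u i ^ 2 ≤ ((s:ℝ) * cnode m) * ∑ i, u i ^ 2 :=
          mul_le_mul_of_nonneg_right this hsum0
      _ = (s:ℝ) * (cnode m * ∑ i, u i ^ 2) := by ring
  exact hfinal.trans (hLHS.trans hdouble)

lemma det_ge_of_quadform {m : ℕ} (A : Matrix (Fin m) (Fin m) ℝ) (hA : A.IsHermitian)
    (ε : ℝ) (hε : 0 ≤ ε)
    (h : ∀ u : Fin m → ℝ, ε * ∑ i, u i ^ 2 ≤ ∑ i, u i * (A *ᵥ u) i) :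
    ε ^ m ≤ A.det := by
  have hev : ∀ i, ε ≤ hA.eigenvalues i := by
    intro i
    set v : Fin m → ℝ := ⇑(hA.eigenvectorBasis i) with hv
    have hnorm : ∑ j, v j ^ 2 = 1 := by
      have h1 : ‖hA.eigenvectorBasis i‖ = 1 := hA.eigenvectorBasis.orthonormal.1 i
      have h2 := EuclideanSpace.norm_eq (hA.eigenvectorBasis i)
      rw [h1] at h2
      have h3 : ∑ j, ‖(hA.eigenvectorBasis i) j‖ ^ 2 = 1 := by
        have := congrArg (fun x : ℝ => x ^ 2) h2.symm
        simpa [Real.sq_sqrt (Finset.sum_nonneg fun j _ => sq_nonneg _)] using this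
      simpa [hv, Real.norm_eq_abs, sq_abs] using h3
    have hmul : A *ᵥ v = hA.eigenvalues i • v := hA.mulVec_eigenvectorBasis i
    have hq := h v
    rw [hmul] at hq
    have : ∑ j, v j * (hA.eigenvalues i • v) j = hA.eigenvalues i := by
      simp only [Pi.smul_apply, smul_eq_mul]
      calc ∑ j, v j * (hA.eigenvalues i * v j) = hA.eigenvalues i * ∑ j, v j ^ 2 := by
            rw [Finset.mul_sum]; apply Finset.sum_congr rfl; intro j _; ring
        _ = hA.eigenvalues i := by rw [hnorm, mul_one]
    rw [this, hnorm, mul_one] at hq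
    exact hq
  have := hA.det_eq_prod_eigenvalues
  rw [this]
  calc ε ^ m = ∏ _i : Fin m, ε := by simp
    _ ≤ ∏ i, hA.eigenvalues i := Finset.prod_le_prod (fun _ _ => hε) (fun i _ => hev i)


/-- For `t ≥ m`, the Gram matrix `X_tᵀ X_t` is invertible and the
entries of its inverse are Hilbert-like: `|((X_tᵀ X_t)⁻¹)_{ij}| ≤ C · t^{1−i−j}`
(1-based indices; here `i j : Fin m` are 0-based so the exponent is `1−(i+1)−(j+1)`). -/
theorem stmt14 (m : ℕ) (hm : 1 ≤ m) :
    ∃ C : ℝ, 0 < C ∧ ∀ t : ℕ, m ≤ t →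
      IsUnit ((designMatR t m)ᵀ * designMatR t m).det ∧
      ∀ i j : Fin m,
        |(((designMatR t m)ᵀ * designMatR t m)⁻¹) i j| ≤
          C * (t : ℝ) ^ (1 - ((i : ℕ) + 1 : ℤ) - ((j : ℕ) + 1 : ℤ)) := by
  have hmR : (0:ℝ) < m := by exact_mod_cast hm
  set c : ℝ := cnode m / (2*m) with hc
  have hc0 : 0 < c := div_pos (cnode_pos hm) (by positivity)
  refine ⟨(Nat.factorial m : ℝ) / c^m, by positivity, ?_⟩
  intro t ht
  have ht0 : 0 < t := lt_of_lt_of_le hm ht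
  have htR : (0:ℝ) < t := by exact_mod_cast ht0
  have htR1 : (1:ℝ) ≤ t := by exact_mod_cast ht0
  set G := (designMatR t m)ᵀ * designMatR t m with hG
  have hGentry : ∀ i j : Fin m, G i j = ∑ k ∈ Finset.range t, ((k:ℝ)+1)^((i:ℕ)+(j:ℕ)) := by
    intro i j
    rw [hG, Matrix.mul_apply]
    rw [← Fin.sum_univ_eq_sum_range (fun k => ((k:ℝ)+1)^((i:ℕ)+(j:ℕ))) t]
    apply Finset.sum_congr rfl
    intro k _
    simp [designMatR, transpose_apply, pow_add]
  set A : Matrix (Fin m) (Fin m) ℝ :=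
    Matrix.of (fun i j : Fin m => ∑ k ∈ Finset.range t, (((k:ℝ)+1)/t)^((i:ℕ)+(j:ℕ))) with hA
  have hAherm : A.IsHermitian := by
    show Aᴴ = A
    ext i j
    simp only [Matrix.conjTranspose_apply, hA, Matrix.of_apply, star_trivial]
    rw [Nat.add_comm (j:ℕ) (i:ℕ)]
  have expand : ∀ u : Fin m → ℝ, ∑ i, u i * (A *ᵥ u) i =
      ∑ k ∈ Finset.range t, (∑ i : Fin m, (((k:ℝ)+1)/t) ^ (i:ℕ) * u i)^2 := by
    intro u
    have e1 : ∑ i, u i * (A *ᵥ u) i = ∑ a : Fin m, ∑ b : Fin m,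
        ∑ k ∈ Finset.range t, ((((k:ℝ)+1)/t)^(a:ℕ) * u a) * ((((k:ℝ)+1)/t)^(b:ℕ) * u b) := by
      apply Finset.sum_congr rfl
      intro a _
      simp only [Matrix.mulVec, dotProduct, hA, Matrix.of_apply]
      rw [Finset.mul_sum]
      apply Finset.sum_congr rfl
      intro b _
      rw [Finset.sum_mul, Finset.mul_sum]
      apply Finset.sum_congr rfl
      intro k _
      rw [pow_add]
      ring
    rw [e1]
    have e2 : ∀ a : Fin m, ∑ b : Fin m,
        ∑ k ∈ Finset.range t, ((((k:ℝ)+1)/t)^(a:ℕ) * u a) * ((((k:ℝ)+1)/t)^(b:ℕ) * u b)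
        = ∑ k ∈ Finset.range t, ∑ b : Fin m,
          ((((k:ℝ)+1)/t)^(a:ℕ) * u a) * ((((k:ℝ)+1)/t)^(b:ℕ) * u b) :=
      fun a => Finset.sum_comm
    rw [Finset.sum_congr rfl (fun a _ => e2 a), Finset.sum_comm]
    apply Finset.sum_congr rfl
    intro k _
    rw [sq, Finset.sum_mul_sum]
  have hAquad : ∀ u : Fin m → ℝ, (c * t) * ∑ i, u i ^ 2 ≤ ∑ i, u i * (A *ᵥ u) i := by
    intro u
    rw [expand u]
    have := grid_quadform hm t ht u
    calc (c*t) * ∑ i, u i ^2 = (cnode m / (2*m)) * t * ∑ i, u i ^ 2 := by rw [hc]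
      _ ≤ _ := this
  have hdetA : (c*t)^m ≤ A.det :=
    det_ge_of_quadform A hAherm (c*t) (by positivity) hAquad
  set S := ∑ i : Fin m, (i:ℕ) with hS
  have hGA : G = Matrix.of (fun i j : Fin m =>
      (t:ℝ)^(i:ℕ) * (Matrix.of (fun i j : Fin m => (t:ℝ)^(j:ℕ) * A i j) i j)) := by
    ext i j
    rw [hGentry i j]
    simp only [Matrix.of_apply, hA]
    rw [Finset.mul_sum, Finset.mul_sum]
    apply Finset.sum_congr rfl
    intro k _
    rw [div_pow, pow_add]
    field_simp
    ring
  have hdetG : G.det = ((t:ℝ)^S)^2 * A.det := by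
    rw [hGA, Matrix.det_mul_column, Matrix.det_mul_row]
    rw [Finset.prod_pow_eq_pow_sum, ← hS]
    ring
  have hdetGlow : c^m * (t:ℝ)^(2*S+m) ≤ G.det := by
    rw [hdetG]
    calc c^m * (t:ℝ)^(2*S+m) = ((t:ℝ)^S)^2 * (c*t)^m := by
          rw [mul_pow, ← pow_mul, pow_add]
          ring
      _ ≤ ((t:ℝ)^S)^2 * A.det := by
          apply mul_le_mul_of_nonneg_left hdetA (by positivity)
  have hdetGpos : 0 < G.det := lt_of_lt_of_le (by positivity) hdetGlow
  refine ⟨isUnit_iff_ne_zero.mpr hdetGpos.ne', ?_⟩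
  intro i j
  set z : ℝ := ((t:ℝ)^((i:ℕ)+(j:ℕ)+1))⁻¹ with hz
  have hz0 : 0 < z := by rw [hz]; positivity
  -- adjugate bound
  have hadjG : |G.adjugate i j| ≤ (Nat.factorial m : ℝ) * (t:ℝ)^(2*S+m) * z := by
    rw [Matrix.adjugate_apply]
    set W : Matrix (Fin m) (Fin m) ℝ :=
      Matrix.of (fun p q : Fin m =>
        (t:ℝ)^((p:ℕ)+(q:ℕ)+1) * (if p = j then z else 1)) with hW
    have hWb : ∀ p q, |(G.updateRow j (Pi.single i 1)) p q| ≤ W p q := by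
      intro p q
      by_cases hp : p = j
      · rw [hp, Matrix.updateRow_self]
        simp only [hW, Matrix.of_apply, if_pos rfl]
        by_cases hq : q = i
        · rw [hq]
          simp only [Pi.single_eq_same, abs_one]
          have he : ((t:ℝ))^((j:ℕ)+(i:ℕ)+1) * z = 1 := by
            rw [hz, Nat.add_comm (j:ℕ) (i:ℕ)]
            exact mul_inv_cancel₀ (by positivity)
          exact le_of_eq he.symm
        · rw [Pi.single_eq_of_ne hq]
          simp only [abs_zero]
          positivity
      · rw [Matrix.updateRow_ne hp]
        simp only [hW, Matrix.of_apply, if_neg hp, mul_one]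
        rw [hGentry p q]
        have h1 : ∀ k ∈ Finset.range t, ((k:ℝ)+1)^((p:ℕ)+(q:ℕ)) ≤ (t:ℝ)^((p:ℕ)+(q:ℕ)) := by
          intro k hk
          apply pow_le_pow_left₀ (by positivity)
          have : (k:ℕ) + 1 ≤ t := Finset.mem_range.mp hk
          exact_mod_cast this
        calc |∑ k ∈ Finset.range t, ((k:ℝ)+1)^((p:ℕ)+(q:ℕ))|
            = ∑ k ∈ Finset.range t, ((k:ℝ)+1)^((p:ℕ)+(q:ℕ)) := by
              rw [abs_of_nonneg (Finset.sum_nonneg fun k _ => by positivity)]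
          _ ≤ ∑ _k ∈ Finset.range t, (t:ℝ)^((p:ℕ)+(q:ℕ)) := Finset.sum_le_sum h1
          _ = (t:ℝ) * (t:ℝ)^((p:ℕ)+(q:ℕ)) := by
              rw [Finset.sum_const, Finset.card_range, nsmul_eq_mul]
          _ = (t:ℝ)^((p:ℕ)+(q:ℕ)+1) := by rw [pow_succ]; ring
    refine (abs_det_le_prod _ W hWb).trans ?_
    have hperm : ∀ σ : Equiv.Perm (Fin m), ∏ q, W (σ q) q = (t:ℝ)^(2*S+m) * z := by
      intro σ
      simp only [hW, Matrix.of_apply]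
      rw [Finset.prod_mul_distrib]
      have h1 : ∏ q : Fin m, (t:ℝ)^(((σ q:Fin m):ℕ)+(q:ℕ)+1) = (t:ℝ)^(2*S+m) := by
        rw [Finset.prod_pow_eq_pow_sum]
        congr 1
        rw [Finset.sum_add_distrib, Finset.sum_add_distrib]
        rw [Equiv.sum_comp σ (fun q : Fin m => (q:ℕ))]
        simp [← hS, two_mul]
      have h2 : ∏ q : Fin m, (if σ q = j then z else 1) = z := by
        have : ∀ q : Fin m, (σ q = j) = (q = σ.symm j) := by
          intro q
          simp [Equiv.apply_eq_iff_eq_symm_apply]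
        simp only [this]
        rw [Finset.prod_ite_eq' Finset.univ (σ.symm j) (fun _ => z)]
        simp
      rw [h1, h2]
    rw [Finset.sum_congr rfl (fun σ _ => hperm σ)]
    rw [Finset.sum_const, Finset.card_univ, Fintype.card_perm, Fintype.card_fin, nsmul_eq_mul]
    exact le_of_eq (by ring)
  have hinv : G⁻¹ i j = G.det⁻¹ * G.adjugate i j := by
    rw [Matrix.inv_def, Ring.inverse_eq_inv']
    simp [Matrix.smul_apply]
  have hzz : (t:ℝ) ^ (1 - ((i:ℕ)+1:ℤ) - ((j:ℕ)+1:ℤ)) = z := by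
    have he : (1 - ((i:ℕ)+1:ℤ) - ((j:ℕ)+1:ℤ)) = -(((i:ℕ)+(j:ℕ)+1 : ℕ) : ℤ) := by
      push_cast; ring
    rw [he, _root_.zpow_neg, zpow_natCast, hz]
  have hTpos : (0:ℝ) < (t:ℝ)^(2*S+m) := by positivity
  calc |G⁻¹ i j| = G.det⁻¹ * |G.adjugate i j| := by
        rw [hinv, abs_mul, abs_inv, abs_of_pos hdetGpos]
    _ ≤ (c^m * (t:ℝ)^(2*S+m))⁻¹ * ((Nat.factorial m : ℝ) * (t:ℝ)^(2*S+m) * z) := by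
        apply mul_le_mul (inv_anti₀ (by positivity) hdetGlow) hadjG (abs_nonneg _)
          (by positivity)
    _ = ((Nat.factorial m : ℝ) / c^m) * z := by
        rw [mul_inv]
        field_simp
    _ = ((Nat.factorial m : ℝ) / c^m) * (t:ℝ) ^ (1 - ((i:ℕ)+1:ℤ) - ((j:ℕ)+1:ℤ)) := by
        rw [hzz]
end

section
/- Fix an integer m ≥ 1 and a real B > 0. There exists a constant C > 0 depending only on m and B such that for every integer t ≥ m and every θ ∈ ℝ^t with ‖θ‖_∞ ≤ B, the ordinary least squares coefficient vector satisfies ‖ (X_tᵀ X_t)^{-1} X_tᵀ θ ‖₂ ≤ C, where X_t is the t × m matrix whose j-th row (j = 1,…,t) is (1, j, j², …, j^{m−1}). -/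
open Matrix

open Polynomial

lemma coeff_prod_abs_le {ι : Type*} (s : Finset ι) (a : ι → ℝ) :
    ∀ n, |(∏ j ∈ s, (X - C (a j))).coeff n| ≤ ∏ j ∈ s, (1 + |a j|) := by
  classical
  induction s using Finset.induction_on with
  | empty => intro n; simp [Polynomial.coeff_one]; split <;> simp
  | insert _ _ hi ih =>
    rename_i i s'
    intro n
    rw [Finset.prod_insert hi, Finset.prod_insert hi]
    have hP : ∀ k, |(∏ j ∈ s', (X - C (a j))).coeff k| ≤ ∏ j ∈ s', (1 + |a j|) := ih
    set P := ∏ j ∈ s', (X - C (a j)) with hPdef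
    have hcoeff : ((X - C (a i)) * P).coeff n = (X * P).coeff n - a i * P.coeff n := by
      rw [sub_mul, coeff_sub, coeff_C_mul]
    have hnonneg : (0:ℝ) ≤ ∏ j ∈ s', (1 + |a j|) :=
      Finset.prod_nonneg fun j _ => by positivity
    have hx : |(X * P).coeff n| ≤ ∏ j ∈ s', (1 + |a j|) := by
      cases n with
      | zero => simp [Polynomial.mul_coeff_zero]; exact hnonneg
      | succ k => rw [Polynomial.coeff_X_mul]; exact hP k
    calc |((X - C (a i)) * P).coeff n| ≤ |(X * P).coeff n| + |a i| * |P.coeff n| := by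
          rw [hcoeff]; exact (abs_sub _ _).trans (by rw [abs_mul])
      _ ≤ (∏ j ∈ s', (1 + |a j|)) + |a i| * (∏ j ∈ s', (1 + |a j|)) := by
          gcongr; exact hP n
      _ = (1 + |a i|) * ∏ j ∈ s', (1 + |a j|) := by ring

lemma coeff_basis_abs_le {m : ℕ} (v : Fin m → ℝ) (r : Fin m) (M : ℝ) (hM : 1 ≤ M)
    (h : ∀ j, j ≠ r → 1 + |v j| ≤ M * |v r - v j|) (n : ℕ) :
    |(Lagrange.basis Finset.univ v r).coeff n| ≤ M ^ (m - 1) := by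
  classical
  have hbasis : Lagrange.basis Finset.univ v r
      = C (∏ j ∈ Finset.univ.erase r, (v r - v j)⁻¹) *
        ∏ j ∈ Finset.univ.erase r, (X - C (v j)) := by
    rw [Lagrange.basis, map_prod, ← Finset.prod_mul_distrib]
    exact Finset.prod_congr rfl fun j _ => rfl
  rw [hbasis, coeff_C_mul, abs_mul, Finset.abs_prod]
  have key : ∀ j ∈ Finset.univ.erase r, |v r - v j| ≠ 0 ∧ 1 + |v j| ≤ M * |v r - v j| := by
    intro j hj
    have hjr : j ≠ r := (Finset.mem_erase.mp hj).1
    refine ⟨?_, h j hjr⟩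
    intro h0
    have := h j hjr
    rw [h0, mul_zero] at this
    nlinarith [abs_nonneg (v j)]
  calc (∏ j ∈ Finset.univ.erase r, |(v r - v j)⁻¹|) *
        |(∏ j ∈ Finset.univ.erase r, (X - C (v j))).coeff n|
      ≤ (∏ j ∈ Finset.univ.erase r, |(v r - v j)|⁻¹) *
        (∏ j ∈ Finset.univ.erase r, (1 + |v j|)) := by
        simp_rw [abs_inv]
        exact mul_le_mul_of_nonneg_left (coeff_prod_abs_le _ _ n)
          (Finset.prod_nonneg fun j _ => by positivity)
    _ = ∏ j ∈ Finset.univ.erase r, (|(v r - v j)|⁻¹ * (1 + |v j|)) := by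
        rw [Finset.prod_mul_distrib]
    _ ≤ ∏ j ∈ Finset.univ.erase r, M := by
        apply Finset.prod_le_prod
        · intro j hj
          have := key j hj
          positivity
        · intro j hj
          obtain ⟨h0, hle⟩ := key j hj
          have hpos : 0 < |v r - v j| := lt_of_le_of_ne (abs_nonneg _) (Ne.symm h0)
          rw [inv_mul_le_iff₀ hpos, mul_comm]
          exact hle
    _ = M ^ (m - 1) := by
        rw [Finset.prod_const, Finset.card_erase_of_mem (Finset.mem_univ r),
          Finset.card_univ, Fintype.card_fin]

lemma block_bound {m : ℕ} (v : Fin m → ℝ) (M : ℝ) (hM : 1 ≤ M)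
    (h : ∀ r j : Fin m, j ≠ r → 1 + |v j| ≤ M * |v r - v j|) (β : Fin m → ℝ) :
    ∑ i, (β i)^2 ≤ (m:ℝ)^2 * (M ^ (m-1))^2 * ∑ r, (∑ i, β i * v r ^ (i:ℕ))^2 := by
  classical
  set p : ℝ[X] := ∑ i : Fin m, C (β i) * X ^ (i:ℕ) with hpdef
  have hcoeff : ∀ i : Fin m, p.coeff (i:ℕ) = β i := by
    intro i
    rw [hpdef, finset_sum_coeff]
    simp only [coeff_C_mul, coeff_X_pow]
    rw [Finset.sum_eq_single i]
    · simp
    · intro j _ hji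
      simp only [Fin.val_inj]
      rw [if_neg fun hh => hji hh.symm, mul_zero]
    · simp
  have hdeg : p.degree < ((Finset.univ : Finset (Fin m)).card : WithBot ℕ) := by
    rw [Finset.card_univ, Fintype.card_fin]
    apply lt_of_le_of_lt (Polynomial.degree_sum_le _ _)
    rw [Finset.sup_lt_iff (by exact_mod_cast WithBot.bot_lt_coe m)]
    intro i _
    exact lt_of_le_of_lt (degree_C_mul_X_pow_le _ _) (by exact_mod_cast i.isLt)
  have hinj : Set.InjOn v (Finset.univ : Finset (Fin m)) := by
    intro a _ b _ hab
    by_contra hne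
    have := h a b (Ne.symm hne)
    rw [hab, sub_self, abs_zero, mul_zero] at this
    nlinarith [abs_nonneg (v b)]
  have hp := Lagrange.eq_interpolate hinj hdeg
  have hbi : ∀ i : Fin m, β i = ∑ r : Fin m, p.eval (v r) *
      (Lagrange.basis Finset.univ v r).coeff (i:ℕ) := by
    intro i
    conv_lhs => rw [← hcoeff i, hp]
    rw [Lagrange.interpolate_apply, finset_sum_coeff]
    exact Finset.sum_congr rfl fun r _ => coeff_C_mul _
  have heval : ∀ r : Fin m, p.eval (v r) = ∑ i, β i * v r ^ (i:ℕ) := by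
    intro r
    rw [hpdef, eval_finset_sum]
    simp
  set K := M ^ (m - 1) with hK
  have hK0 : 0 ≤ K := by positivity
  have habs : ∀ i : Fin m, |β i| ≤ (∑ r : Fin m, |p.eval (v r)|) * K := by
    intro i
    rw [hbi i, Finset.sum_mul]
    refine (Finset.abs_sum_le_sum_abs _ _).trans (Finset.sum_le_sum fun r _ => ?_)
    rw [abs_mul]
    exact mul_le_mul_of_nonneg_left (coeff_basis_abs_le v r M hM (fun j hj => h r j hj) _)
      (abs_nonneg _)
  have hsq : ∀ i : Fin m, (β i)^2 ≤ K^2 * ((m:ℝ) * ∑ r : Fin m, (p.eval (v r))^2) := by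
    intro i
    have h1 : (β i)^2 ≤ ((∑ r : Fin m, |p.eval (v r)|) * K)^2 := by
      rw [← sq_abs (β i)]
      exact pow_le_pow_left₀ (abs_nonneg _) (habs i) 2
    have h2 : (∑ r : Fin m, |p.eval (v r)|)^2 ≤ (m:ℝ) * ∑ r : Fin m, (p.eval (v r))^2 := by
      have := sq_sum_le_card_mul_sum_sq (s := (Finset.univ : Finset (Fin m)))
        (f := fun r => |p.eval (v r)|)
      simpa [sq_abs] using this
    calc (β i)^2 ≤ ((∑ r : Fin m, |p.eval (v r)|) * K)^2 := h1
      _ = (∑ r : Fin m, |p.eval (v r)|)^2 * K^2 := by ring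
      _ ≤ ((m:ℝ) * ∑ r : Fin m, (p.eval (v r))^2) * K^2 := by
          exact mul_le_mul_of_nonneg_right h2 (by positivity)
      _ = K^2 * ((m:ℝ) * ∑ r : Fin m, (p.eval (v r))^2) := by ring
  calc ∑ i, (β i)^2 ≤ ∑ _i : Fin m, K^2 * ((m:ℝ) * ∑ r : Fin m, (p.eval (v r))^2) :=
        Finset.sum_le_sum fun i _ => hsq i
    _ = (m:ℝ)^2 * K^2 * ∑ r : Fin m, (p.eval (v r))^2 := by
        rw [Finset.sum_const, Finset.card_univ, Fintype.card_fin, nsmul_eq_mul]; ring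
    _ = (m:ℝ)^2 * K^2 * ∑ r, (∑ i, β i * v r ^ (i:ℕ))^2 := by
        congr 1; exact Finset.sum_congr rfl fun r _ => by rw [heval r]

/-- The OLS coefficients of polynomial regression on a uniformly
bounded sequence are bounded by a constant depending only on `m` and `B`:
`‖(X_tᵀ X_t)⁻¹ X_tᵀ θ‖₂ ≤ C` whenever `t ≥ m` and `‖θ‖_∞ ≤ B`. -/
theorem stmt15 (m : ℕ) (hm : 1 ≤ m) (B : ℝ) (hB : 0 < B) :
    ∃ C : ℝ, 0 < C ∧ ∀ t : ℕ, m ≤ t → ∀ θ : Fin t → ℝ, (∀ i, |θ i| ≤ B) →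
      Real.sqrt (∑ j, ((((designMatR t m)ᵀ * designMatR t m)⁻¹).mulVec
        ((designMatR t m)ᵀ.mulVec θ) j) ^ 2) ≤ C := by
  classical
  have hm0 : (0:ℝ) < m := by exact_mod_cast hm
  set K : ℝ := (3*(m:ℝ)) ^ (m-1) with hKdef
  have hK0 : 0 < K := by positivity
  set Carg : ℝ := 2 * (m:ℝ)^3 * K^2 * B^2 with hCarg
  have hCpos : 0 < Carg := by positivity
  refine ⟨Real.sqrt Carg, Real.sqrt_pos.mpr hCpos, ?_⟩
  intro t ht θ hθ
  by_cases hdet : IsUnit ((designMatR t m)ᵀ * designMatR t m).det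
  case neg =>
    rw [Matrix.nonsing_inv_apply_not_isUnit _ hdet]
    simp only [Matrix.zero_mulVec, Pi.zero_apply]
    simp only [ne_eq, zero_pow, Finset.sum_const, smul_zero]
    simp
  -- main case
  set Xt := designMatR t m with hXt
  set b := (Xtᵀ * Xt)⁻¹.mulVec (Xtᵀ.mulVec θ) with hb
  set u := Xt.mulVec b with hu
  set q := t / m with hq
  have hm0' : 0 < m := hm
  have hq1 : 1 ≤ q := (Nat.one_le_div_iff hm0').mpr ht
  have hq0 : 0 < q := hq1
  have hmq : m * q ≤ t := by rw [hq]; exact Nat.mul_div_le t m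
  have ht2 : t ≤ 2 * (m * q) := by
    have h1 := Nat.div_add_mod t m
    rw [← hq] at h1
    have h2 : t % m < m := Nat.mod_lt _ hm0'
    have h3 : m ≤ m * q := Nat.le_mul_of_pos_right m hq0
    omega
  -- normal equations
  have hA : (Xtᵀ * Xt).mulVec b = Xtᵀ.mulVec θ := by
    rw [hb, Matrix.mulVec_mulVec, Matrix.mul_nonsing_inv _ hdet, Matrix.one_mulVec]
  have hXu : Xtᵀ.mulVec u = Xtᵀ.mulVec θ := by
    rw [hu, Matrix.mulVec_mulVec]; exact hA
  set S : ℝ := ∑ j, (u j)^2 with hS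
  have hS0 : 0 ≤ S := Finset.sum_nonneg fun j _ => sq_nonneg _
  have hSeq : S = θ ⬝ᵥ u := by
    have e1 : S = u ⬝ᵥ u := by
      rw [hS]; simp [dotProduct, sq]
    have e2 : u ⬝ᵥ u = (Xtᵀ.mulVec u) ⬝ᵥ b := by
      rw [hu]
      rw [Matrix.dotProduct_mulVec, ← Matrix.mulVec_transpose]
    have e3 : θ ⬝ᵥ u = (Xtᵀ.mulVec θ) ⬝ᵥ b := by
      rw [hu, Matrix.dotProduct_mulVec, ← Matrix.mulVec_transpose]
    rw [e1, e2, hXu, ← e3]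
  have hT : ∑ j, (θ j)^2 ≤ (t:ℝ) * B^2 := by
    calc ∑ j, (θ j)^2 ≤ ∑ _j : Fin t, B^2 := by
          refine Finset.sum_le_sum fun j _ => ?_
          rw [← sq_abs]
          exact pow_le_pow_left₀ (abs_nonneg _) (hθ j) 2
      _ = (t:ℝ) * B^2 := by rw [Finset.sum_const, Finset.card_univ, Fintype.card_fin, nsmul_eq_mul]
  have hSle : S ≤ (t:ℝ) * B^2 := by
    rcases eq_or_lt_of_le hS0 with h0 | hpos
    · rw [← h0]; positivity
    · have hcs : (θ ⬝ᵥ u)^2 ≤ (∑ j, (θ j)^2) * S := by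
        rw [hS]
        exact Finset.sum_mul_sq_le_sq_mul_sq _ _ _
      have : S * S ≤ ((t:ℝ) * B^2) * S := by
        calc S * S = (θ ⬝ᵥ u)^2 := by rw [← hSeq]; ring
          _ ≤ (∑ j, (θ j)^2) * S := hcs
          _ ≤ ((t:ℝ) * B^2) * S := mul_le_mul_of_nonneg_right hT hS0
      exact le_of_mul_le_mul_right this hpos
  -- per-block bound
  set L : ℝ := ∑ i, (b i)^2 with hL
  set g : ℕ → ℝ := fun n => if h : n < t then (u ⟨n, h⟩)^2 else 0 with hg
  have hg0 : ∀ n, 0 ≤ g n := by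
    intro n; rw [hg]; dsimp only; split
    · exact sq_nonneg _
    · exact le_refl 0
  have hnode_lt : ∀ k, k < q → ∀ r : Fin m, k + (r:ℕ)*q < t := by
    intro k hk r
    have hcalc : k + (r:ℕ)*q + 1 ≤ t := by
      calc k + (r:ℕ)*q + 1 = (k + 1) + (r:ℕ)*q := by ring
        _ ≤ q + (r:ℕ)*q := by omega
        _ = ((r:ℕ)+1)*q := by ring
        _ ≤ m*q := Nat.mul_le_mul_right q r.isLt
        _ ≤ t := hmq
    omega
  have h1m : (1:ℝ) ≤ (m:ℝ) := by exact_mod_cast hm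
  have hM : (1:ℝ) ≤ 3*(m:ℝ) := by linarith
  have hblock : ∀ k, k < q → L ≤ (m:ℝ)^2 * K^2 * ∑ r : Fin m, g (k + (r:ℕ)*q) := by
    intro k hk
    set v : Fin m → ℝ := fun r => ((k + (r:ℕ)*q : ℕ) : ℝ) + 1 with hv
    have hvnonneg : ∀ r, 0 ≤ v r := by
      intro r; rw [hv]; positivity
    have hvle : ∀ r : Fin m, v r ≤ (t:ℝ) := by
      intro r
      rw [hv]
      have := hnode_lt k hk r
      have : ((k + (r:ℕ)*q : ℕ) : ℝ) + 1 ≤ (t:ℝ) := by exact_mod_cast this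
      exact this
    have ht3 : (t:ℝ) + 1 ≤ 3*(m:ℝ)*(q:ℝ) := by
      have h1 : (t:ℝ) ≤ 2*((m:ℝ)*(q:ℝ)) := by exact_mod_cast ht2
      have h2 : (1:ℝ) ≤ (m:ℝ)*(q:ℝ) := by
        have : 1 ≤ m * q := Nat.one_le_iff_ne_zero.mpr (by positivity)
        exact_mod_cast this
      nlinarith
    have hvdiff : ∀ r j : Fin m, j ≠ r → (q:ℝ) ≤ |v r - v j| := by
      intro r j hne
      have hvrj : v r - v j = ((r:ℕ):ℝ)*(q:ℝ) - ((j:ℕ):ℝ)*(q:ℝ) := by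
        rw [hv]; push_cast; ring
      have hne' : ((r:ℕ):ℤ) - ((j:ℕ):ℤ) ≠ 0 := by
        intro hcon
        apply hne
        apply Fin.ext
        omega
      have h1 : (1:ℤ) ≤ |((r:ℕ):ℤ) - ((j:ℕ):ℤ)| := Int.one_le_abs hne'
      have h2 : (1:ℝ) ≤ |((r:ℕ):ℝ) - ((j:ℕ):ℝ)| := by
        have h1r : ((1:ℤ):ℝ) ≤ ((|((r:ℕ):ℤ) - ((j:ℕ):ℤ)|:ℤ):ℝ) := Int.cast_le.mpr h1
        rw [Int.cast_abs] at h1r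
        push_cast at h1r
        exact h1r
      have hq0' : (0:ℝ) ≤ (q:ℝ) := Nat.cast_nonneg q
      calc (q:ℝ) = 1 * (q:ℝ) := (one_mul _).symm
        _ ≤ |((r:ℕ):ℝ) - ((j:ℕ):ℝ)| * (q:ℝ) := mul_le_mul_of_nonneg_right h2 hq0'
        _ = |(((r:ℕ):ℝ) - ((j:ℕ):ℝ)) * (q:ℝ)| := by
            rw [abs_mul, abs_of_nonneg hq0']
        _ = |v r - v j| := by rw [hvrj]; congr 1; ring
    have hcond : ∀ r j : Fin m, j ≠ r → 1 + |v j| ≤ (3*(m:ℝ)) * |v r - v j| := by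
      intro r j hne
      calc 1 + |v j| = 1 + v j := by rw [abs_of_nonneg (hvnonneg j)]
        _ ≤ (t:ℝ) + 1 := by have := hvle j; linarith
        _ ≤ 3*(m:ℝ)*(q:ℝ) := ht3
        _ ≤ (3*(m:ℝ)) * |v r - v j| := by
            refine mul_le_mul_of_nonneg_left (hvdiff r j hne) ?_
            positivity
    have hbb := block_bound v (3*(m:ℝ)) hM hcond b
    rw [hL]
    refine hbb.trans (le_of_eq ?_)
    rw [hKdef]
    congr 1
    refine Finset.sum_congr rfl fun r _ => ?_
    congr 1
    have hlt := hnode_lt k hk r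
    have hgval : g (k + (r:ℕ)*q) = (u ⟨k + (r:ℕ)*q, hlt⟩)^2 := by
      simp only [hg]
      rw [dif_pos hlt]
    rw [hgval]
    have : u ⟨k + (r:ℕ)*q, hlt⟩ = ∑ i, b i * v r ^ (i:ℕ) := by
      rw [hu]
      simp only [Matrix.mulVec, dotProduct, hXt, designMatR, Matrix.of_apply]
      exact Finset.sum_congr rfl fun i _ => by rw [mul_comm]
    rw [this]
  -- sum over blocks
  have hsum : ∑ k ∈ Finset.range q, ∑ r : Fin m, g (k + (r:ℕ)*q) ≤ S := by
    have hprod : ∑ k ∈ Finset.range q, ∑ r : Fin m, g (k + (r:ℕ)*q)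
        = ∑ p ∈ (Finset.range q) ×ˢ (Finset.univ : Finset (Fin m)), g (p.1 + (p.2:ℕ)*q) :=
      (Finset.sum_product' _ _ _).symm
    have hinj : ∀ p ∈ (Finset.range q) ×ˢ (Finset.univ : Finset (Fin m)),
        ∀ p' ∈ (Finset.range q) ×ˢ (Finset.univ : Finset (Fin m)),
        p.1 + (p.2:ℕ)*q = p'.1 + (p'.2:ℕ)*q → p = p' := by
      intro p hp p' hp' heq
      rw [Finset.mem_product, Finset.mem_range] at hp hp'
      have h1 : p.1 % q = p.1 := Nat.mod_eq_of_lt hp.1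
      have h1' : p'.1 % q = p'.1 := Nat.mod_eq_of_lt hp'.1
      have hk : p.1 = p'.1 := by
        have := congrArg (fun n => n % q) heq
        simpa [Nat.add_mul_mod_self_right, h1, h1'] using this
      have hr : (p.2:ℕ) = (p'.2:ℕ) := by
        rw [hk] at heq
        have := Nat.add_left_cancel heq
        exact Nat.eq_of_mul_eq_mul_right hq0 this
      exact Prod.ext hk (Fin.ext hr)
    have himg : ∑ p ∈ (Finset.range q) ×ˢ (Finset.univ : Finset (Fin m)), g (p.1 + (p.2:ℕ)*q)
        = ∑ n ∈ ((Finset.range q) ×ˢ (Finset.univ : Finset (Fin m))).image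
            (fun p : ℕ × Fin m => p.1 + (p.2:ℕ)*q), g n :=
      (Finset.sum_image hinj).symm
    have hsub : ((Finset.range q) ×ˢ (Finset.univ : Finset (Fin m))).image
        (fun p : ℕ × Fin m => p.1 + (p.2:ℕ)*q) ⊆ Finset.range t := by
      intro n hn
      rw [Finset.mem_image] at hn
      obtain ⟨p, hp, rfl⟩ := hn
      rw [Finset.mem_product, Finset.mem_range] at hp
      exact Finset.mem_range.mpr (hnode_lt p.1 hp.1 p.2)
    have hSg : S = ∑ n ∈ Finset.range t, g n := by
      rw [hS, ← Fin.sum_univ_eq_sum_range (fun n => g n) t]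
      refine Finset.sum_congr rfl fun j _ => ?_
      rw [hg]
      dsimp only
      rw [dif_pos j.isLt]
    rw [hprod, himg, hSg]
    exact Finset.sum_le_sum_of_subset_of_nonneg hsub fun n _ _ => hg0 n
  -- combine
  have hL0 : 0 ≤ L := Finset.sum_nonneg fun i _ => sq_nonneg _
  have hfinal : (q:ℝ) * L ≤ Carg * (q:ℝ) := by
    have h5 : (q:ℝ) * L = ∑ _k ∈ Finset.range q, L := by
      rw [Finset.sum_const, Finset.card_range, nsmul_eq_mul]
    have h6 : (q:ℝ) * L ≤ (m:ℝ)^2 * K^2 * S := by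
      rw [h5]
      calc ∑ k ∈ Finset.range q, L
          ≤ ∑ k ∈ Finset.range q, (m:ℝ)^2 * K^2 * ∑ r : Fin m, g (k + (r:ℕ)*q) :=
            Finset.sum_le_sum fun k hk => hblock k (Finset.mem_range.mp hk)
        _ = (m:ℝ)^2 * K^2 * ∑ k ∈ Finset.range q, ∑ r : Fin m, g (k + (r:ℕ)*q) := by
            rw [Finset.mul_sum]
        _ ≤ (m:ℝ)^2 * K^2 * S := by
            refine mul_le_mul_of_nonneg_left hsum ?_; positivity
    have h7 : (m:ℝ)^2 * K^2 * S ≤ (m:ℝ)^2 * K^2 * ((t:ℝ) * B^2) := by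
      refine mul_le_mul_of_nonneg_left hSle ?_; positivity
    have h8 : (t:ℝ) ≤ 2*((m:ℝ)*(q:ℝ)) := by exact_mod_cast ht2
    have h9 : (m:ℝ)^2 * K^2 * ((t:ℝ) * B^2) ≤ Carg * (q:ℝ) := by
      rw [hCarg]
      nlinarith [mul_le_mul_of_nonneg_left h8 (show (0:ℝ) ≤ (m:ℝ)^2*K^2*B^2 by positivity)]
    linarith
  have hLC : L ≤ Carg := by
    have hq0r : (0:ℝ) < (q:ℝ) := by exact_mod_cast hq0
    have := hfinal
    rw [mul_comm (q:ℝ) L] at this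
    exact le_of_mul_le_mul_right this hq0r
  exact Real.sqrt_le_sqrt hLC
end
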